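/- For every standard Young tableau T of skew shape λ/μ with n = |λ/μ| cells and every i ∈ {1,…,n−2}: i ∈ Des(T) if and only if i ∈ Des(Rot_SE(T)). That is, the southeast rotation preserves the descent set restricted to {1,…,n−2}. -/

import Mathlib

/-!
Common definitions for skew shapes, standard Young tableaux, the southeast
boundary, southeast min-unimodal sets, the southeast rotation `Rot_SE`,
balance, balance points, and the map `Θ`, following the paper.

Cells are pairs `(i, j) : ℕ × ℕ` (row `i` counted from the top, column `j`
counted from the left).  South means larger row index, east means larger
column index.
-/

open scoped Classical

namespace SkewSE

abbrev Cell : Type := ℕ × ℕ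

/-- `a` is weakly southwest of `b`: weakly south (row ≥) and weakly west (col ≤). -/
def weakSW (a b : Cell) : Prop := b.1 ≤ a.1 ∧ a.2 ≤ b.2

/-- `a` is strictly southwest of `b`: strictly south and strictly west. -/
def strictSW (a b : Cell) : Prop := b.1 < a.1 ∧ a.2 < b.2

/-- The (strict) southwest-to-northeast order on cells:
`a` comes before `b` if `a` is weakly southwest of `b` and `a ≠ b`. -/
def swLT (a b : Cell) : Prop := weakSW a b ∧ a ≠ b

/-- Two cells are adjacent if they share an edge. -/
def adjacent (a b : Cell) : Prop :=
  (a.1 = b.1 ∧ (a.2 = b.2 + 1 ∨ b.2 = a.2 + 1)) ∨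
  (a.2 = b.2 ∧ (a.1 = b.1 + 1 ∨ b.1 = a.1 + 1))

/-- `a` and `b` lie in the same connected component of the set of cells `P`
(with respect to edge-adjacency). -/
def sameComp (P : Finset Cell) (a b : Cell) : Prop :=
  a ∈ P ∧ b ∈ P ∧ Relation.ReflTransGen (fun x y => x ∈ P ∧ y ∈ P ∧ adjacent x y) a b

/-- The cells of the skew shape `λ/μ`. -/
def skewCells (lam mu : YoungDiagram) : Finset Cell := lam.cells \ mu.cells

/-- `n = |λ/μ|`, the number of cells. -/
def numCells (lam mu : YoungDiagram) : ℕ := (skewCells lam mu).card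

/-- A set of cells is a skew shape if it is the difference of two Young diagrams. -/
def IsSkewShape (P : Finset Cell) : Prop :=
  ∃ lam' mu' : YoungDiagram, mu' ≤ lam' ∧ P = lam'.cells \ mu'.cells

/-- A standard Young tableau of skew shape `λ/μ`: a bijective filling of the
cells by `{1,…,n}`, strictly increasing west-to-east along rows and
north-to-south down columns.  (Entries are `0` off the shape.) -/
structure SYT (lam mu : YoungDiagram) where
  entry : Cell → ℕ
  bijOn : Set.BijOn entry (skewCells lam mu : Set Cell)
    ((Finset.Icc 1 (numCells lam mu) : Finset ℕ) : Set ℕ)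
  row_lt : ∀ i j : ℕ, (i, j) ∈ skewCells lam mu → (i, j + 1) ∈ skewCells lam mu →
    entry (i, j) < entry (i, j + 1)
  col_lt : ∀ i j : ℕ, (i, j) ∈ skewCells lam mu → (i + 1, j) ∈ skewCells lam mu →
    entry (i, j) < entry (i + 1, j)
  zero_outside : ∀ c : Cell, c ∉ skewCells lam mu → entry c = 0

variable {lam mu : YoungDiagram}

/-- `pos T x` is the cell of `T` containing the entry `x`. -/
noncomputable def pos (T : SYT lam mu) (x : ℕ) : Cell :=
  if h : ∃ c ∈ skewCells lam mu, T.entry c = x then h.choose else (0, 0)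

/-- The southeast boundary of `λ/μ`: cells `(i,j)` with `(i+1, j+1) ∉ λ/μ`. -/
def SEboundary (lam mu : YoungDiagram) : Finset Cell :=
  (skewCells lam mu).filter (fun c => (c.1 + 1, c.2 + 1) ∉ skewCells lam mu)

/-- `S` is southeast min-unimodal in `T`: the cells `pos_T(S)` lie on the
southeast boundary, in a single connected component of `λ/μ`, are totally
ordered southwest-to-northeast, and the entries, read in the
southwest-to-northeast order of their cells, strictly decrease until
reaching `min S` and then strictly increase. -/
def MinUnimodalSE (T : SYT lam mu) (S : Finset ℕ) : Prop :=
  ∃ hne : S.Nonempty,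
    S ⊆ Finset.Icc 1 (numCells lam mu) ∧
    (∀ x ∈ S, pos T x ∈ SEboundary lam mu) ∧
    (∀ x ∈ S, ∀ y ∈ S, sameComp (skewCells lam mu) (pos T x) (pos T y)) ∧
    (∀ x ∈ S, ∀ y ∈ S, weakSW (pos T x) (pos T y) ∨ weakSW (pos T y) (pos T x)) ∧
    (∀ x ∈ S, ∀ y ∈ S, swLT (pos T x) (pos T y) →
      (weakSW (pos T y) (pos T (S.min' hne)) → y < x) ∧
      (weakSW (pos T (S.min' hne)) (pos T x) → x < y))

/-- `k` such that `Rc_SE(T) = {n-k+1, …, n}`: the maximal `k ≥ 1` for which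
this set is southeast min-unimodal in `T`. -/
noncomputable def kSE (T : SYT lam mu) : ℕ :=
  sSup {k : ℕ | 1 ≤ k ∧ k ≤ numCells lam mu ∧
    MinUnimodalSE T (Finset.Icc (numCells lam mu - k + 1) (numCells lam mu))}

/-- `Rc_SE(T) = {n-k+1, …, n}` with `k` maximal as above. -/
noncomputable def RcSE (T : SYT lam mu) : Finset ℕ :=
  Finset.Icc (numCells lam mu - kSE T + 1) (numCells lam mu)

/-- `Rp_SE(T) = pos_T(Rc_SE(T))`. -/
noncomputable def RpSE (T : SYT lam mu) : Finset Cell := (RcSE T).image (pos T)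

/-- `Y = pos_T(min Rc_SE(T))`. -/
noncomputable def Ycell (T : SYT lam mu) : Cell :=
  pos T (numCells lam mu - kSE T + 1)

/-- The position of the largest entry `n`. -/
noncomputable def posN (T : SYT lam mu) : Cell := pos T (numCells lam mu)

/-- `pos_T(n)` is the southwesternmost cell of `Rp_SE(T)`. -/
def SWmostAtN (T : SYT lam mu) : Prop := ∀ c ∈ RpSE T, weakSW (posN T) c

/-- `pos_T(n)` is the northeasternmost cell of `Rp_SE(T)`. -/
def NEmostAtN (T : SYT lam mu) : Prop := ∀ c ∈ RpSE T, weakSW c (posN T)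

/-- The southernmost cell of `P` in the column of `Y`. -/
noncomputable def southEnd (P : Finset Cell) (Y : Cell) : Cell :=
  if h : ∃ c ∈ P, c.2 = Y.2 ∧ ∀ d ∈ P, d.2 = Y.2 → d.1 ≤ c.1 then h.choose else Y

/-- The easternmost cell of `P` in the row of `Y`. -/
noncomputable def eastEnd (P : Finset Cell) (Y : Cell) : Cell :=
  if h : ∃ c ∈ P, c.1 = Y.1 ∧ ∀ d ∈ P, d.1 = Y.1 → d.2 ≤ c.2 then h.choose else Y

/-- The southeast rotation endpoint `X` of `T`. -/
noncomputable def Xend (T : SYT lam mu) : Cell :=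
  if SWmostAtN T then
    if ∃ c ∈ RpSE T, c.2 = (Ycell T).2 ∧ (Ycell T).1 < c.1 then
      southEnd (RpSE T) (Ycell T)
    else eastEnd (RpSE T) (Ycell T)
  else
    if ∃ c ∈ RpSE T, c.1 = (Ycell T).1 ∧ (Ycell T).2 < c.2 then
      eastEnd (RpSE T) (Ycell T)
    else southEnd (RpSE T) (Ycell T)

/-- The cells `Z_1, …, Z_j` of `Rp_SE(T)` lying weakly between `pos_T(n)`
and `X` in the southwest-to-northeast order. -/
noncomputable def chainSE (T : SYT lam mu) : Finset Cell :=
  (RpSE T).filter (fun c =>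
    (weakSW (posN T) c ∧ weakSW c (Xend T)) ∨ (weakSW (Xend T) c ∧ weakSW c (posN T)))

/-- The next cell of `P` after `c` in southwest-to-northeast order. -/
noncomputable def nextNE (P : Finset Cell) (c : Cell) : Cell :=
  if h : ∃ d ∈ P, swLT c d ∧ ∀ e ∈ P, swLT c e → weakSW d e then h.choose else c

/-- The next cell of `P` before `c` in southwest-to-northeast order. -/
noncomputable def nextSW (P : Finset Cell) (c : Cell) : Cell :=
  if h : ∃ d ∈ P, swLT d c ∧ ∀ e ∈ P, swLT e c → weakSW e d then h.choose else c

/-- The filling `Rot_SE(T)` produced by the southeast rotation: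
`n` moves to `X`, and the entries of the cells of `Rp_SE(T)` weakly between
`pos_T(n)` and `X` are each shifted one position towards `pos_T(n)`;
all other entries are unchanged. -/
noncomputable def rotEntry (T : SYT lam mu) (c : Cell) : ℕ :=
  if c ∈ chainSE T then
    if c = Xend T then numCells lam mu
    else if SWmostAtN T then T.entry (nextNE (chainSE T) c)
    else T.entry (nextSW (chainSE T) c)
  else T.entry c

/-- The southeast rotation as a map `SYT(λ/μ) → SYT(λ/μ)`
(well-defined since the rotated filling is again standard). -/
noncomputable def RotSE (T : SYT lam mu) : SYT lam mu :=
  if h : ∃ R : SYT lam mu, R.entry = rotEntry T then h.choose else T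

/-- The descent set `Des(T) = {i : pos_T(i+1) is strictly south of pos_T(i)}`. -/
noncomputable def Des (T : SYT lam mu) : Finset ℕ :=
  (Finset.Icc 1 (numCells lam mu - 1)).filter
    (fun i => (pos T i).1 < (pos T (i + 1)).1)

/-- `S` is balanced with respect to `W` in `U`: the entries in the cells of
`pos_U(S)` weakly northeast of `W` increase from southwest to northeast, and
the entries in the cells of `pos_U(S)` weakly southwest of `W` increase from
northeast to southwest. -/
def Balanced (U : SYT lam mu) (S : Finset ℕ) (W : Cell) : Prop :=
  (∀ x ∈ S, ∀ y ∈ S, weakSW W (pos U x) → weakSW W (pos U y) →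
    swLT (pos U x) (pos U y) → x < y) ∧
  (∀ x ∈ S, ∀ y ∈ S, weakSW (pos U x) W → weakSW (pos U y) W →
    swLT (pos U y) (pos U x) → x < y)

/-- `a` and `b` are distinct and consecutive in the southwest-to-northeast
order on the set of cells `Q`. -/
def consecutiveIn (Q : Finset Cell) (a b : Cell) : Prop :=
  a ∈ Q ∧ b ∈ Q ∧ (swLT a b ∨ swLT b a) ∧
  ∀ c ∈ Q, ¬ (swLT a c ∧ swLT c b) ∧ ¬ (swLT b c ∧ swLT c a)

/-- The northern balance point of a southeast exterior corner `Z`: the cell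
of the southeast boundary weakly due north of `Z` farthest from `Z`. -/
noncomputable def northBP (lam mu : YoungDiagram) (Z : Cell) : Cell :=
  if h : ∃ c ∈ SEboundary lam mu, c.2 = Z.2 ∧ c.1 ≤ Z.1 ∧
      ∀ d ∈ SEboundary lam mu, d.2 = Z.2 → d.1 ≤ Z.1 → c.1 ≤ d.1
  then h.choose else Z

/-- The western balance point of a southeast exterior corner `Z`: the cell
of the southeast boundary weakly due west of `Z` farthest from `Z`. -/
noncomputable def westBP (lam mu : YoungDiagram) (Z : Cell) : Cell :=
  if h : ∃ c ∈ SEboundary lam mu, c.1 = Z.1 ∧ c.2 ≤ Z.2 ∧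
      ∀ d ∈ SEboundary lam mu, d.1 = Z.1 → d.2 ≤ Z.2 → c.2 ≤ d.2
  then h.choose else Z

/-- Property (i) for `S = {n-1, …, n-k+1}` in `R`:
`S` is southeast min-unimodal in `R` and lies in the same connected
component of `λ/μ` as `pos_R(n)` (vacuous when `S` is empty, i.e. `k = 1`). -/
def PropI (R : SYT lam mu) (k : ℕ) : Prop :=
  (Finset.Icc (numCells lam mu - k + 1) (numCells lam mu - 1)).Nonempty →
    MinUnimodalSE R (Finset.Icc (numCells lam mu - k + 1) (numCells lam mu - 1)) ∧
    ∀ x ∈ Finset.Icc (numCells lam mu - k + 1) (numCells lam mu - 1),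
      sameComp (skewCells lam mu) (pos R x) (pos R (numCells lam mu))

/-- `pos_R(S)` contains the northern neighbor of `pos_R(n)`,
for `S = {n-1, …, n-k+1}`. -/
def hasNorthNbr (R : SYT lam mu) (k : ℕ) : Prop :=
  ∃ x ∈ Finset.Icc (numCells lam mu - k + 1) (numCells lam mu - 1),
    (pos R x).2 = (pos R (numCells lam mu)).2 ∧
    (pos R x).1 + 1 = (pos R (numCells lam mu)).1

/-- `pos_R(S)` contains the western neighbor of `pos_R(n)`,
for `S = {n-1, …, n-k+1}`. -/
def hasWestNbr (R : SYT lam mu) (k : ℕ) : Prop :=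
  ∃ x ∈ Finset.Icc (numCells lam mu - k + 1) (numCells lam mu - 1),
    (pos R x).1 = (pos R (numCells lam mu)).1 ∧
    (pos R x).2 + 1 = (pos R (numCells lam mu)).2

/-- Property (ii) for `S = {n-1, …, n-k+1}` in `R`. -/
def PropII (R : SYT lam mu) (k : ℕ) : Prop :=
  ¬ (hasNorthNbr R k ∧ hasWestNbr R k) ∧
  (hasNorthNbr R k →
    Balanced R (Finset.Icc (numCells lam mu - k + 1) (numCells lam mu - 1))
      (northBP lam mu (pos R (numCells lam mu)))) ∧
  (hasWestNbr R k →
    Balanced R (Finset.Icc (numCells lam mu - k + 1) (numCells lam mu - 1))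
      (westBP lam mu (pos R (numCells lam mu)))) ∧
  (¬ hasNorthNbr R k → ¬ hasWestNbr R k →
    Balanced R (Finset.Icc (numCells lam mu - k + 1) (numCells lam mu - 1))
      (northBP lam mu (pos R (numCells lam mu))) ∧
    Balanced R (Finset.Icc (numCells lam mu - k + 1) (numCells lam mu - 1))
      (westBP lam mu (pos R (numCells lam mu))))

/-- The maximal `k` such that `S = {n-1, …, n-k+1}` satisfies properties
(i) and (ii) in `R`; used to define `Θ`. -/
noncomputable def kTheta (R : SYT lam mu) : ℕ :=
  sSup {k : ℕ | 1 ≤ k ∧ k ≤ numCells lam mu ∧ PropI R k ∧ PropII R k}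

/-- The southwesternmost cell of `P`. -/
noncomputable def SWend (P : Finset Cell) : Cell :=
  if h : ∃ c ∈ P, ∀ d ∈ P, weakSW c d then h.choose else (0, 0)

/-- The northeasternmost cell of `P`. -/
noncomputable def NEend (P : Finset Cell) : Cell :=
  if h : ∃ c ∈ P, ∀ d ∈ P, weakSW d c then h.choose else (0, 0)

/-- `P = pos_R({n, …, n-k+1})` for `k = kTheta R`. -/
noncomputable def PTheta (R : SYT lam mu) : Finset Cell :=
  (Finset.Icc (numCells lam mu - kTheta R + 1) (numCells lam mu)).image (pos R)

/-- `pos_R(n - k + 1)` for `k = kTheta R`. -/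
noncomputable def posMTheta (R : SYT lam mu) : Cell :=
  pos R (numCells lam mu - kTheta R + 1)

/-- `Θ` moves `n` to the southwestern end exactly when: `pos_R(n)` and
`pos_R(n-k+1)` lie in different connected components of `P` and
`pos_R(n-k+1)` is on the southwestern side, or they lie in the same
connected component and `pos_R(n-k+1)` is on the northeastern side. -/
def destIsSW (R : SYT lam mu) : Prop :=
  weakSW (posMTheta R) (posN R) ↔ ¬ sameComp (PTheta R) (posN R) (posMTheta R)

/-- The destination cell for `n` under `Θ`. -/
noncomputable def destTheta (R : SYT lam mu) : Cell :=
  if destIsSW R then SWend (PTheta R) else NEend (PTheta R)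

/-- The cells of `P` weakly between the destination cell and `pos_R(n)`. -/
noncomputable def chainTheta (R : SYT lam mu) : Finset Cell :=
  (PTheta R).filter (fun c =>
    (weakSW (destTheta R) c ∧ weakSW c (posN R)) ∨
    (weakSW (posN R) c ∧ weakSW c (destTheta R)))

/-- The filling `Θ(R)`: `n` moves from `pos_R(n)` to the destination cell,
and each entry occupying a cell of `P` strictly between them is shifted one
position in `P` closer to `pos_R(n)`; all other entries are unchanged. -/
noncomputable def thetaEntry (R : SYT lam mu) (c : Cell) : ℕ :=
  if c ∈ chainTheta R then
    if c = destTheta R then numCells lam mu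
    else if destIsSW R then R.entry (nextSW (chainTheta R) c)
    else R.entry (nextNE (chainTheta R) c)
  else R.entry c

/-- The map `Θ` as a map on standard Young tableaux. -/
noncomputable def Theta (R : SYT lam mu) : SYT lam mu :=
  if h : ∃ U : SYT lam mu, U.entry = thetaEntry R then h.choose else R

/-- A single-column rectangle with northern endpoint `Y` and southern endpoint `X`. -/
def IsColSeg (P : Finset Cell) (Y X : Cell) : Prop :=
  Y.2 = X.2 ∧ Y.1 ≤ X.1 ∧ P = (Finset.Icc Y.1 X.1).image (fun i => (i, Y.2))

/-- A single-row rectangle with western endpoint `Y` and eastern endpoint `X`. -/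
def IsRowSeg (P : Finset Cell) (Y X : Cell) : Prop :=
  Y.1 = X.1 ∧ Y.2 ≤ X.2 ∧ P = (Finset.Icc Y.2 X.2).image (fun j => (Y.1, j))

/-- A hook with northwestern corner `Y`, southern endpoint `A`, and eastern
endpoint `B` (both arms of positive length). -/
def IsHook (P : Finset Cell) (Y A B : Cell) : Prop :=
  A.2 = Y.2 ∧ Y.1 < A.1 ∧ B.1 = Y.1 ∧ Y.2 < B.2 ∧
  P = (Finset.Icc Y.1 A.1).image (fun i => (i, Y.2)) ∪
      (Finset.Icc Y.2 B.2).image (fun j => (Y.1, j))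

end SkewSE

namespace SkewSE


/-! ### Auxiliary lemmas -/

section Aux

variable {lam mu : YoungDiagram}

theorem weakSW_refl (a : Cell) : weakSW a a := ⟨le_refl _, le_refl _⟩

theorem weakSW_trans {a b c : Cell} (h1 : weakSW a b) (h2 : weakSW b c) : weakSW a c :=
  ⟨le_trans h2.1 h1.1, le_trans h1.2 h2.2⟩

theorem weakSW_antisymm {a b : Cell} (h1 : weakSW a b) (h2 : weakSW b a) : a = b :=
  Prod.ext (le_antisymm h2.1 h1.1) (le_antisymm h1.2 h2.2)

theorem swLT_irrefl (a : Cell) : ¬ swLT a a := fun h => h.2 rfl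

theorem swLT_asymm {a b : Cell} (h1 : swLT a b) (h2 : swLT b a) : False :=
  h1.2 (weakSW_antisymm h1.1 h2.1)

/-- Intermediate cells of a "rectangle interval" are in the skew shape. -/
theorem mem_skew_of_between {r1 c1 r2 c2 r c : ℕ}
    (h1 : (r1, c1) ∈ skewCells lam mu) (h2 : (r2, c2) ∈ skewCells lam mu)
    (hr1 : r1 ≤ r) (hr2 : r ≤ r2) (hc1 : c1 ≤ c) (hc2 : c ≤ c2) :
    (r, c) ∈ skewCells lam mu := by
  simp only [skewCells, Finset.mem_sdiff, YoungDiagram.mem_cells] at *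
  refine ⟨lam.up_left_mem hr2 hc2 h2.1, fun hmem => h1.2 (mu.up_left_mem hr1 hc1 hmem)⟩

theorem entry_mem {T : SYT lam mu} {c : Cell} (hc : c ∈ skewCells lam mu) :
    T.entry c ∈ Finset.Icc 1 (numCells lam mu) := by
  have := T.bijOn.mapsTo hc
  simpa using this

theorem pos_spec {T : SYT lam mu} {x : ℕ} (hx : x ∈ Finset.Icc 1 (numCells lam mu)) :
    pos T x ∈ skewCells lam mu ∧ T.entry (pos T x) = x := by
  have h : ∃ c ∈ skewCells lam mu, T.entry c = x := by
    obtain ⟨c, hc, hce⟩ := T.bijOn.surjOn (by simpa using hx : (x : ℕ) ∈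
      ((Finset.Icc 1 (numCells lam mu) : Finset ℕ) : Set ℕ))
    exact ⟨c, hc, hce⟩
  rw [pos, dif_pos h]
  exact h.choose_spec

theorem pos_mem {T : SYT lam mu} {x : ℕ} (hx : x ∈ Finset.Icc 1 (numCells lam mu)) :
    pos T x ∈ skewCells lam mu := (pos_spec hx).1

theorem entry_pos {T : SYT lam mu} {x : ℕ} (hx : x ∈ Finset.Icc 1 (numCells lam mu)) :
    T.entry (pos T x) = x := (pos_spec hx).2

theorem pos_eq_of {T : SYT lam mu} {c : Cell} {x : ℕ}
    (hc : c ∈ skewCells lam mu) (he : T.entry c = x) : pos T x = c := by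
  have hx : x ∈ Finset.Icc 1 (numCells lam mu) := he ▸ entry_mem hc
  exact T.bijOn.injOn (pos_mem hx) hc (by rw [entry_pos hx, he])

theorem pos_injOn {T : SYT lam mu} {x y : ℕ} (hx : x ∈ Finset.Icc 1 (numCells lam mu))
    (hy : y ∈ Finset.Icc 1 (numCells lam mu)) (h : pos T x = pos T y) : x = y := by
  rw [← entry_pos (T := T) hx, ← entry_pos (T := T) hy, h]

/-- Entries strictly increase along a row. -/
theorem entry_row_lt {T : SYT lam mu} {r c1 c2 : ℕ}
    (h1 : (r, c1) ∈ skewCells lam mu) (h2 : (r, c2) ∈ skewCells lam mu) (h : c1 < c2) :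
    T.entry (r, c1) < T.entry (r, c2) := by
  induction c2 with
  | zero => omega
  | succ c ih =>
    have hc : (r, c) ∈ skewCells lam mu ∨ c1 = c := by
      rcases eq_or_lt_of_le (Nat.lt_succ_iff.mp h) with h' | h'
      · exact Or.inr h'
      · exact Or.inl (mem_skew_of_between h1 h2 le_rfl le_rfl (le_of_lt h') (by omega))
    rcases hc with hc | rfl
    · rcases eq_or_lt_of_le (Nat.lt_succ_iff.mp h) with h' | h'
      · subst h'; exact T.row_lt r c1 h1 h2
      · exact lt_trans (ih hc h') (T.row_lt r c hc h2)
    · exact T.row_lt r c1 h1 h2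

/-- Entries strictly increase down a column. -/
theorem entry_col_lt {T : SYT lam mu} {c r1 r2 : ℕ}
    (h1 : (r1, c) ∈ skewCells lam mu) (h2 : (r2, c) ∈ skewCells lam mu) (h : r1 < r2) :
    T.entry (r1, c) < T.entry (r2, c) := by
  induction r2 with
  | zero => omega
  | succ r ih =>
    have hc : (r, c) ∈ skewCells lam mu ∨ r1 = r := by
      rcases eq_or_lt_of_le (Nat.lt_succ_iff.mp h) with h' | h'
      · exact Or.inr h'
      · exact Or.inl (mem_skew_of_between h1 h2 (le_of_lt h') (by omega) le_rfl le_rfl)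
    rcases hc with hc | rfl
    · rcases eq_or_lt_of_le (Nat.lt_succ_iff.mp h) with h' | h'
      · subst h'; exact T.col_lt r1 c h1 h2
      · exact lt_trans (ih hc h') (T.col_lt r c hc h2)
    · exact T.col_lt r1 c h1 h2

/-- Entries strictly increase to the (weak) southeast. -/
theorem entry_lt_of_le_le {T : SYT lam mu} {a b : Cell}
    (ha : a ∈ skewCells lam mu) (hb : b ∈ skewCells lam mu)
    (h1 : a.1 ≤ b.1) (h2 : a.2 ≤ b.2) (hne : a ≠ b) :
    T.entry a < T.entry b := by
  obtain ⟨a1, a2⟩ := a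
  obtain ⟨b1, b2⟩ := b
  rcases eq_or_lt_of_le h2 with rfl | h2'
  · rcases eq_or_lt_of_le h1 with rfl | h1'
    · exact absurd rfl hne
    · exact entry_col_lt ha hb h1'
  · have hm : (a1, b2) ∈ skewCells lam mu :=
      mem_skew_of_between ha hb le_rfl h1 (le_of_lt h2') le_rfl
    rcases eq_or_lt_of_le h1 with rfl | h1'
    · exact entry_row_lt ha hb h2'
    · exact lt_trans (entry_row_lt ha hm h2') (entry_col_lt hm hb h1')

/-- If `a` is weakly southwest of `b` but has the larger entry,
then `a` is strictly south of `b`. -/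
theorem strict_south_of_entry {T : SYT lam mu} {a b : Cell}
    (ha : a ∈ skewCells lam mu) (hb : b ∈ skewCells lam mu)
    (hsw : weakSW a b) (he : T.entry b < T.entry a) : b.1 < a.1 := by
  rcases eq_or_lt_of_le hsw.1 with h | h
  · exfalso
    have hne : b ≠ a := fun hh => by rw [hh] at he; omega
    have := entry_lt_of_le_le (T := T) ha hb (le_of_eq h.symm) hsw.2
      (fun hh => hne hh.symm)
    omega
  · exact h

/-- The descent dichotomy: consecutive entries sit either strictly south
(weakly west) or strictly east (weakly north) of one another. -/
theorem descent_dichotomy {T : SYT lam mu} {x : ℕ}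
    (hx : x ∈ Finset.Icc 1 (numCells lam mu))
    (hx1 : x + 1 ∈ Finset.Icc 1 (numCells lam mu)) :
    ((pos T x).1 < (pos T (x + 1)).1 ↔ ¬ ((pos T x).2 < (pos T (x + 1)).2)) := by
  set a := pos T x with hadef
  set b := pos T (x + 1) with hbdef
  have ha : a ∈ skewCells lam mu := pos_mem hx
  have hb : b ∈ skewCells lam mu := pos_mem hx1
  have hea : T.entry a = x := entry_pos hx
  have heb : T.entry b = x + 1 := entry_pos hx1
  have hne : a ≠ b := fun h => by rw [h, heb] at hea; omega
  -- exclude b weakly northwest of a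
  have hNW : ¬ (b.1 ≤ a.1 ∧ b.2 ≤ a.2) := by
    rintro ⟨h1, h2⟩
    have := entry_lt_of_le_le (T := T) hb ha h1 h2 (fun h => hne h.symm)
    omega
  -- exclude b strictly southeast of a
  have hSE : ¬ (a.1 < b.1 ∧ a.2 < b.2) := by
    rintro ⟨h1, h2⟩
    have hm : (a.1, b.2) ∈ skewCells lam mu := by
      have ha' : (a.1, a.2) ∈ skewCells lam mu := by simpa using ha
      have hb' : (b.1, b.2) ∈ skewCells lam mu := by simpa using hb
      exact mem_skew_of_between ha' hb' le_rfl (le_of_lt h1) (le_of_lt h2) le_rfl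
    have e1 : T.entry a < T.entry (a.1, b.2) := by
      have ha' : (a.1, a.2) ∈ skewCells lam mu := by simpa using ha
      have := entry_row_lt (T := T) ha' hm h2
      simpa using this
    have e2 : T.entry (a.1, b.2) < T.entry b := by
      have hb' : (b.1, b.2) ∈ skewCells lam mu := by simpa using hb
      have := entry_col_lt (T := T) hm hb' h1
      simpa using this
    omega
  constructor
  · intro h hcol; exact hSE ⟨h, hcol⟩
  · intro h
    by_contra hrow
    exact hNW ⟨not_lt.mp hrow, not_lt.mp h⟩

end Aux


section Aux2

variable {lam mu : YoungDiagram}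

theorem boundary_subset_skew : SEboundary lam mu ⊆ skewCells lam mu :=
  Finset.filter_subset _ _

theorem mem_boundary {c : Cell} : c ∈ SEboundary lam mu ↔
    c ∈ skewCells lam mu ∧ (c.1 + 1, c.2 + 1) ∉ skewCells lam mu := by
  simp [SEboundary]

/-- Any two cells on the southeast boundary are `weakSW`-comparable. -/
theorem boundary_comparable {a b : Cell} (ha : a ∈ SEboundary lam mu)
    (hb : b ∈ SEboundary lam mu) : weakSW a b ∨ weakSW b a := by
  obtain ⟨ha1, ha2⟩ := mem_boundary.mp ha
  obtain ⟨hb1, hb2⟩ := mem_boundary.mp hb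
  rcases le_or_gt b.1 a.1 with h1 | h1
  · rcases le_or_gt a.2 b.2 with h2 | h2
    · exact Or.inl ⟨h1, h2⟩
    · rcases eq_or_lt_of_le h1 with h1' | h1'
      · exact Or.inr ⟨le_of_eq h1'.symm, le_of_lt h2⟩
      · exfalso
        apply hb2
        have ha' : (a.1, a.2) ∈ skewCells lam mu := by simpa using ha1
        have hb' : (b.1, b.2) ∈ skewCells lam mu := by simpa using hb1
        exact mem_skew_of_between hb' ha' (by omega) (by omega) (by omega) (by omega)
  · rcases le_or_gt b.2 a.2 with h2 | h2
    · exact Or.inr ⟨le_of_lt h1, h2⟩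
    · exfalso
      apply ha2
      have ha' : (a.1, a.2) ∈ skewCells lam mu := by simpa using ha1
      have hb' : (b.1, b.2) ∈ skewCells lam mu := by simpa using hb1
      exact mem_skew_of_between ha' hb' (by omega) (by omega) (by omega) (by omega)

/-- A maximum exists in any nonempty finite set of pairwise comparable cells. -/
theorem exists_weakSW_max (P : Finset Cell) (hne : P.Nonempty)
    (hcomp : ∀ a ∈ P, ∀ b ∈ P, weakSW a b ∨ weakSW b a) :
    ∃ m ∈ P, ∀ a ∈ P, weakSW a m := by
  classical
  induction P using Finset.induction_on with
  | empty => exact absurd hne (by simp)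
  | insert _ _ hc ih =>
    rename_i c s
    rcases s.eq_empty_or_nonempty with rfl | hs
    · refine ⟨c, by simp, ?_⟩
      intro a ha
      simp only [Finset.mem_insert, Finset.notMem_empty, or_false] at ha
      subst ha
      exact weakSW_refl _
    · obtain ⟨m, hm, hmax⟩ := ih hs (fun a ha b hb =>
        hcomp a (Finset.mem_insert_of_mem ha) b (Finset.mem_insert_of_mem hb))
      rcases hcomp c (Finset.mem_insert_self c s) m
        (Finset.mem_insert_of_mem hm) with h | h
      · refine ⟨m, Finset.mem_insert_of_mem hm, ?_⟩
        intro a ha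
        rcases Finset.mem_insert.mp ha with rfl | ha'
        · exact h
        · exact hmax a ha'
      · refine ⟨c, Finset.mem_insert_self c s, ?_⟩
        intro a ha
        rcases Finset.mem_insert.mp ha with rfl | ha'
        · exact weakSW_refl _
        · exact weakSW_trans (hmax a ha') h

/-- The step relation used in `sameComp` is symmetric. -/
theorem sameComp_symm {P : Finset Cell} {a b : Cell} (h : sameComp P a b) :
    sameComp P b a := by
  obtain ⟨haP, hbP, hpath⟩ := h
  refine ⟨hbP, haP, ?_⟩
  have : ∀ x y, (fun x y => x ∈ P ∧ y ∈ P ∧ adjacent x y) x y →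
      (fun x y => x ∈ P ∧ y ∈ P ∧ adjacent x y) y x := by
    rintro x y ⟨hx, hy, hadj⟩
    refine ⟨hy, hx, ?_⟩
    unfold adjacent at *
    tauto
  exact (@Relation.ReflTransGen.stdSymm _ _ ⟨this⟩).symm _ _ hpath

theorem sameComp_trans {P : Finset Cell} {a b c : Cell} (h1 : sameComp P a b)
    (h2 : sameComp P b c) : sameComp P a c :=
  ⟨h1.1, h2.2.1, Relation.ReflTransGen.trans h1.2.2 h2.2.2⟩

/-- Cells of `skewCells` in the same row are in the same component. -/
theorem sameComp_of_same_row {a b : Cell} (ha : a ∈ skewCells lam mu)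
    (hb : b ∈ skewCells lam mu) (hrow : a.1 = b.1) :
    sameComp (skewCells lam mu) a b := by
  -- WLOG a.2 ≤ b.2 via an auxiliary claim
  have key : ∀ d : ℕ, ∀ a b : Cell, a ∈ skewCells lam mu → b ∈ skewCells lam mu →
      a.1 = b.1 → a.2 ≤ b.2 → b.2 - a.2 = d → sameComp (skewCells lam mu) a b := by
    intro d
    induction d with
    | zero =>
      intro a b ha hb hrow hle hd
      have : a = b := Prod.ext hrow (by omega)
      subst this
      exact ⟨ha, ha, Relation.ReflTransGen.refl⟩
    | succ k ih =>
      intro a b ha hb hrow hle hd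
      have hmid : (a.1, a.2 + 1) ∈ skewCells lam mu := by
        have ha' : (a.1, a.2) ∈ skewCells lam mu := by simpa using ha
        have hb' : (b.1, b.2) ∈ skewCells lam mu := by simpa using hb
        exact mem_skew_of_between ha' hb' le_rfl (by omega) (by omega) (by omega)
      have hstep : sameComp (skewCells lam mu) a (a.1, a.2 + 1) := by
        refine ⟨ha, hmid, Relation.ReflTransGen.single ⟨ha, hmid, ?_⟩⟩
        exact Or.inl ⟨rfl, Or.inr rfl⟩
      exact sameComp_trans hstep (ih (a.1, a.2 + 1) b hmid hb hrow (by omega) (by omega))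
  rcases le_or_gt a.2 b.2 with h | h
  · exact key _ a b ha hb hrow h rfl
  · exact sameComp_symm (key _ b a hb ha hrow.symm (le_of_lt h) rfl)

/-- Intermediate-row value theorem along a component path. -/
theorem exists_row_on_path {P : Finset Cell} {a b : Cell}
    (hpath : Relation.ReflTransGen (fun x y => x ∈ P ∧ y ∈ P ∧ adjacent x y) a b)
    (haP : a ∈ P) {r : ℕ} (h1 : b.1 ≤ r) (h2 : r ≤ a.1) :
    ∃ z, z ∈ P ∧ z.1 = r ∧
      Relation.ReflTransGen (fun x y => x ∈ P ∧ y ∈ P ∧ adjacent x y) z b := by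
  induction hpath using Relation.ReflTransGen.head_induction_on with
  | refl => exact ⟨b, haP, by omega, Relation.ReflTransGen.refl⟩
  | @head a c hac hcb ih =>
    rcases le_or_gt r c.1 with h | h
    · exact ih hac.2.1 h
    · -- r > c.1 and r ≤ a.1 and adjacent a c forces r = a.1
      have : a.1 = r := by
        obtain ⟨-, -, hadj⟩ := hac
        unfold adjacent at hadj
        omega
      exact ⟨a, hac.1, this, Relation.ReflTransGen.head hac hcb⟩

end Aux2


section Aux3

/-- Specification of `nextSW` when a predecessor exists. -/
theorem nextSW_spec {P : Finset Cell} {c : Cell}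
    (hcomp : ∀ a ∈ P, ∀ b ∈ P, weakSW a b ∨ weakSW b a)
    (hex : ∃ e ∈ P, swLT e c) :
    nextSW P c ∈ P ∧ swLT (nextSW P c) c ∧
      ∀ e ∈ P, swLT e c → weakSW e (nextSW P c) := by
  classical
  have h : ∃ d ∈ P, swLT d c ∧ ∀ e ∈ P, swLT e c → weakSW e d := by
    obtain ⟨e0, he0, he0lt⟩ := hex
    obtain ⟨m, hm, hmax⟩ := exists_weakSW_max (P.filter (fun e => swLT e c))
      ⟨e0, Finset.mem_filter.mpr ⟨he0, he0lt⟩⟩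
      (fun a ha b hb => hcomp a (Finset.mem_filter.mp ha).1 b (Finset.mem_filter.mp hb).1)
    obtain ⟨hmP, hmlt⟩ := Finset.mem_filter.mp hm
    exact ⟨m, hmP, hmlt, fun e he helt => hmax e (Finset.mem_filter.mpr ⟨he, helt⟩)⟩
  rw [nextSW, dif_pos h]
  obtain ⟨hd1, hd2, hd3⟩ := h.choose_spec
  exact ⟨hd1, hd2, hd3⟩

/-- Specification of `nextNE` when a successor exists. -/
theorem nextNE_spec {P : Finset Cell} {c : Cell}
    (hcomp : ∀ a ∈ P, ∀ b ∈ P, weakSW a b ∨ weakSW b a)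
    (hex : ∃ e ∈ P, swLT c e) :
    nextNE P c ∈ P ∧ swLT c (nextNE P c) ∧
      ∀ e ∈ P, swLT c e → weakSW (nextNE P c) e := by
  classical
  have h : ∃ d ∈ P, swLT c d ∧ ∀ e ∈ P, swLT c e → weakSW d e := by
    obtain ⟨e0, he0, he0lt⟩ := hex
    -- a minimum of the set of successors
    have : ∃ m ∈ (P.filter (fun e => swLT c e)), ∀ a ∈ (P.filter (fun e => swLT c e)),
        weakSW m a := by
      -- minimum: use max of the reversed order... direct induction instead
      classical
      set Q := P.filter (fun e => swLT c e) with hQ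
      have hQne : Q.Nonempty := ⟨e0, Finset.mem_filter.mpr ⟨he0, he0lt⟩⟩
      have hQcomp : ∀ a ∈ Q, ∀ b ∈ Q, weakSW a b ∨ weakSW b a :=
        fun a ha b hb => hcomp a (Finset.mem_filter.mp ha).1 b (Finset.mem_filter.mp hb).1
      clear_value Q
      clear hQ
      induction Q using Finset.induction_on with
      | empty => exact absurd hQne (by simp)
      | insert _ _ hc ih =>
        rename_i d s
        rcases s.eq_empty_or_nonempty with rfl | hs
        · refine ⟨d, by simp, ?_⟩
          intro a ha
          simp only [Finset.mem_insert, Finset.notMem_empty, or_false] at ha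
          subst ha
          exact weakSW_refl _
        · obtain ⟨m, hm, hmin⟩ := ih hs (fun a ha b hb =>
            hQcomp a (Finset.mem_insert_of_mem ha) b (Finset.mem_insert_of_mem hb))
          rcases hQcomp d (Finset.mem_insert_self d s) m
            (Finset.mem_insert_of_mem hm) with h | h
          · refine ⟨d, Finset.mem_insert_self d s, ?_⟩
            intro a ha
            rcases Finset.mem_insert.mp ha with rfl | ha'
            · exact weakSW_refl _
            · exact weakSW_trans h (hmin a ha')
          · refine ⟨m, Finset.mem_insert_of_mem hm, ?_⟩
            intro a ha
            rcases Finset.mem_insert.mp ha with rfl | ha'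
            · exact h
            · exact hmin a ha'
    obtain ⟨m, hm, hmin⟩ := this
    obtain ⟨hmP, hmlt⟩ := Finset.mem_filter.mp hm
    exact ⟨m, hmP, hmlt, fun e he helt => hmin e (Finset.mem_filter.mpr ⟨he, helt⟩)⟩
  rw [nextNE, dif_pos h]
  obtain ⟨hd1, hd2, hd3⟩ := h.choose_spec
  exact ⟨hd1, hd2, hd3⟩

/-- `nextNE` is the inverse of `nextSW` on a comparable set. -/
theorem nextNE_nextSW {P : Finset Cell} {c : Cell}
    (hcomp : ∀ a ∈ P, ∀ b ∈ P, weakSW a b ∨ weakSW b a)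
    (hcP : c ∈ P) (hex : ∃ e ∈ P, swLT e c) :
    nextNE P (nextSW P c) = c := by
  obtain ⟨hB1, hB2, hB3⟩ := nextSW_spec hcomp hex
  set B := nextSW P c
  -- c is the minimum successor of B
  have hmin : ∀ e ∈ P, swLT B e → weakSW c e := by
    intro e he hBe
    rcases hcomp c hcP e he with h | h
    · exact h
    · -- e weakly southwest of c
      rcases eq_or_ne e c with rfl | hne
      · exact weakSW_refl _
      · have := hB3 e he ⟨h, hne⟩
        exact absurd (weakSW_antisymm hBe.1 this) hBe.2
  obtain ⟨hd1, hd2, hd3⟩ := nextNE_spec hcomp ⟨c, hcP, hB2⟩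
  exact weakSW_antisymm (hd3 c hcP hB2) (hmin _ hd1 hd2)

end Aux3


section MainAbstract

theorem Icc_min'_eq {a b : ℕ} (h : a ≤ b) (hne : (Finset.Icc a b).Nonempty) :
    (Finset.Icc a b).min' hne = a :=
  le_antisymm (Finset.min'_le _ a (by simp [h]))
    (Finset.le_min' _ _ _ (fun y hy => (Finset.mem_Icc.mp hy).1))

set_option maxHeartbeats 2000000 in
/-- core abstract lemma -/
theorem main_abstract {lam mu : YoungDiagram} (U V : SYT lam mu)
    (m₀ : ℕ) (hm1 : 1 ≤ m₀) (hm2 : m₀ ≤ numCells lam mu)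
    (hMU : MinUnimodalSE U (Finset.Icc m₀ (numCells lam mu)))
    (X : Cell) (hXP : X ∈ (Finset.Icc m₀ (numCells lam mu)).image (pos U))
    (hSWm : ∀ c ∈ (Finset.Icc m₀ (numCells lam mu)).image (pos U),
      weakSW (pos U (numCells lam mu)) c)
    (hH4 : ∀ c ∈ ((Finset.Icc m₀ (numCells lam mu)).image (pos U)).filter
        (fun c => weakSW c X), weakSW (pos U m₀) c → c.1 = (pos U m₀).1)
    (hH5 : ∀ c, c ∉ ((Finset.Icc m₀ (numCells lam mu)).image (pos U)).filter
        (fun c => weakSW c X) → V.entry c = U.entry c)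
    (hH6 : ∀ c ∈ ((Finset.Icc m₀ (numCells lam mu)).image (pos U)).filter
        (fun c => weakSW c X), c ≠ X →
        V.entry c = U.entry (nextNE (((Finset.Icc m₀ (numCells lam mu)).image
          (pos U)).filter (fun c => weakSW c X)) c))
    (hmax : 2 ≤ m₀ →
      ¬ MinUnimodalSE U (Finset.Icc (m₀ - 1) (numCells lam mu)))
    (i : ℕ) (hi1 : 1 ≤ i) (hi2 : i + 1 ≤ numCells lam mu - 1) :
    ((pos U i).1 < (pos U (i + 1)).1 ↔ (pos V i).1 < (pos V (i + 1)).1) := by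
  classical
  set n := numCells lam mu with hn
  set S : Finset ℕ := Finset.Icc m₀ n with hSdef
  set P : Finset Cell := S.image (pos U) with hPdef
  set C : Finset Cell := P.filter (fun c => weakSW c X) with hCdef
  have hn3 : 3 ≤ n := by omega
  obtain ⟨hne0, hsub0, hbdy0, hsc0, hcmp0, hord0⟩ := hMU
  have hmin : S.min' hne0 = m₀ := Icc_min'_eq hm2 hne0
  rw [hmin] at hord0
  -- basic membership facts
  have hSsub : ∀ x ∈ S, x ∈ Finset.Icc 1 n := by
    intro x hx
    simp only [hSdef, Finset.mem_Icc] at hx ⊢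
    omega
  have hnS : n ∈ S := by simp [hSdef, hm2]
  have hm0S : m₀ ∈ S := by simp [hSdef, hm2]
  have hiI : i ∈ Finset.Icc 1 n := by simp; omega
  have hjI : i + 1 ∈ Finset.Icc 1 n := by simp; omega
  have hnI : n ∈ Finset.Icc 1 n := by simp; omega
  -- cells of P
  have hPval : ∀ c ∈ P, ∃ x ∈ S, pos U x = c := by
    intro c hc
    simpa [hPdef] using hc
  have hPskew : ∀ c ∈ P, c ∈ skewCells lam mu := by
    intro c hc
    obtain ⟨x, hx, rfl⟩ := hPval c hc
    exact pos_mem (hSsub x hx)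
  have hPbdy : ∀ c ∈ P, c ∈ SEboundary lam mu := by
    intro c hc
    obtain ⟨x, hx, rfl⟩ := hPval c hc
    exact hbdy0 x hx
  have hPentry : ∀ c ∈ P, U.entry c ∈ S ∧ pos U (U.entry c) = c := by
    intro c hc
    obtain ⟨x, hx, rfl⟩ := hPval c hc
    rw [entry_pos (hSsub x hx)]
    exact ⟨hx, rfl⟩
  have hPcomp : ∀ a ∈ P, ∀ b ∈ P, weakSW a b ∨ weakSW b a := by
    intro a ha b hb
    exact boundary_comparable (hPbdy a ha) (hPbdy b hb)
  have hmemP : ∀ x ∈ Finset.Icc 1 n, (pos U x ∈ P ↔ x ∈ S) := by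
    intro x hx
    constructor
    · intro h
      obtain ⟨y, hy, hxy⟩ := hPval _ h
      rwa [← pos_injOn (hSsub y hy) hx hxy]
    · intro h
      exact Finset.mem_image_of_mem _ h
  have hCP : C ⊆ P := Finset.filter_subset _ _
  have hCX : ∀ c ∈ C, weakSW c X := by
    intro c hc
    exact (Finset.mem_filter.mp hc).2
  have hCcomp : ∀ a ∈ C, ∀ b ∈ C, weakSW a b ∨ weakSW b a :=
    fun a ha b hb => hPcomp a (hCP ha) b (hCP hb)
  have hposNC : pos U n ∈ C := by
    rw [hCdef, Finset.mem_filter]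
    exact ⟨Finset.mem_image_of_mem _ hnS, hSWm X hXP⟩
  have hXC : X ∈ C := by
    rw [hCdef, Finset.mem_filter]
    exact ⟨hXP, weakSW_refl X⟩
  have hYP : pos U m₀ ∈ P := Finset.mem_image_of_mem _ hm0S
  -- predecessors in the chain
  have hpred : ∀ A ∈ C, A ≠ pos U n →
      nextSW C A ∈ C ∧ swLT (nextSW C A) A ∧
        ∀ e ∈ C, swLT e A → weakSW e (nextSW C A) := by
    intro A hA hAn
    exact nextSW_spec hCcomp ⟨pos U n, hposNC, hSWm A (hCP hA), fun h => hAn h.symm⟩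
  have hne_posN : ∀ x ∈ Finset.Icc 1 n, x ≠ n → pos U x ≠ pos U n := by
    intro x hx hxn h
    exact hxn (pos_injOn hx hnI h)
  -- position in V of a moved entry
  have hmoved : ∀ x ∈ Finset.Icc 1 n, x ≠ n → pos U x ∈ C →
      pos V x = nextSW C (pos U x) := by
    intro x hx hxn hxC
    obtain ⟨hB1, hB2, hB3⟩ := hpred _ hxC (hne_posN x hx hxn)
    set B := nextSW C (pos U x) with hBdef
    have hBX : B ≠ X := by
      intro h
      have h1 : weakSW (pos U x) B := h ▸ hCX _ hxC
      exact hB2.2 (weakSW_antisymm hB2.1 h1)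
    have hVB : V.entry B = x := by
      rw [hH6 B hB1 hBX]
      show U.entry (nextNE C (nextSW C (pos U x))) = x
      rw [nextNE_nextSW hCcomp hxC ⟨pos U n, hposNC, hSWm _ (hCP hxC),
        fun h => (hne_posN x hx hxn) h.symm⟩]
      exact entry_pos hx
    exact pos_eq_of (hPskew B (hCP hB1)) hVB
  have hunmoved : ∀ x ∈ Finset.Icc 1 n, pos U x ∉ C → pos V x = pos U x := by
    intro x hx hxC
    have : V.entry (pos U x) = x := by
      rw [hH5 _ hxC, entry_pos hx]
    exact pos_eq_of (pos_mem hx) this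
  -- τ : predecessor of a "decreasing-arm" chain cell is strictly south
  have htau : ∀ A ∈ C, A ≠ pos U n → weakSW A (pos U m₀) →
      A.1 < (nextSW C A).1 := by
    intro A hA hAn hAY
    obtain ⟨hB1, hB2, hB3⟩ := hpred _ hA hAn
    set B := nextSW C A with hBdef
    obtain ⟨hwS, hwpos⟩ := hPentry B (hCP hB1)
    obtain ⟨hxS, hxpos⟩ := hPentry A (hCP hA)
    have hordi := hord0 (U.entry B) hwS (U.entry A) hxS (by rw [hwpos, hxpos]; exact hB2)
    have hlt : U.entry A < U.entry B := (hordi.1 (by rwa [hxpos]))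
    exact strict_south_of_entry (hPskew B (hCP hB1)) (hPskew A (hCP hA)) hB2.1 hlt
  -- σ : cells strictly southwest of Y are strictly south of Y
  have hsigma : ∀ Z ∈ P, swLT Z (pos U m₀) → (pos U m₀).1 < Z.1 := by
    intro Z hZ hZY
    obtain ⟨hzS, hzpos⟩ := hPentry Z hZ
    have hzm : m₀ < U.entry Z := by
      rcases eq_or_lt_of_le ((Finset.mem_Icc.mp (by rwa [hSdef] at hzS)).1) with h | h
      · exfalso
        exact hZY.2 (by rw [← hzpos, ← h])
      · exact h
    have := strict_south_of_entry (T := U) (hPskew Z hZ) (pos_mem (hSsub m₀ hm0S))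
      hZY.1 (by rwa [entry_pos (hSsub m₀ hm0S)])
    exact this
  -- ρ : chain cells weakly northeast of Y are in the row of Y, as are
  -- their predecessors
  have hrho : ∀ A ∈ C, A ≠ pos U n → swLT (pos U m₀) A →
      A.1 = (pos U m₀).1 ∧ (nextSW C A).1 = (pos U m₀).1 := by
    intro A hA hAn hYA
    have hA1 : A.1 = (pos U m₀).1 := hH4 A hA hYA.1
    obtain ⟨hB1, hB2, hB3⟩ := hpred _ hA hAn
    have hYC : pos U m₀ ∈ C := by
      rw [hCdef, Finset.mem_filter]
      exact ⟨hYP, weakSW_trans hYA.1 (hCX A hA)⟩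
    have h1 : weakSW (pos U m₀) (nextSW C A) := hB3 _ hYC hYA
    have h2 : (nextSW C A).1 ≤ (pos U m₀).1 := h1.1
    have h3 : A.1 ≤ (nextSW C A).1 := hB2.1.1
    omega
  -- entries of i and i+1
  have hin : i ≠ n := by omega
  have hjn : i + 1 ≠ n := by omega
  by_cases hMi : pos U i ∈ C <;> by_cases hMj : pos U (i + 1) ∈ C
  · -- case (b): both moved
    have hiS : i ∈ S := (hmemP i hiI).mp (hCP hMi)
    have hjS : i + 1 ∈ S := (hmemP (i+1) hjI).mp (hCP hMj)
    rw [hmoved i hiI hin hMi, hmoved (i+1) hjI hjn hMj]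
    obtain ⟨hBi1, hBi2, hBi3⟩ := hpred _ hMi (hne_posN i hiI hin)
    obtain ⟨hBj1, hBj2, hBj3⟩ := hpred _ hMj (hne_posN (i+1) hjI hjn)
    have hij_ne : pos U i ≠ pos U (i+1) := by
      intro h
      have := pos_injOn hiI hjI h
      omega
    rcases hPcomp _ (hCP hMi) _ (hCP hMj) with hcm | hcm
    · -- (b2) : i southwest of i+1
      have hsw : swLT (pos U i) (pos U (i+1)) := ⟨hcm, hij_ne⟩
      have hordi := hord0 i hiS (i+1) hjS hsw
      have hnYj : ¬ weakSW (pos U (i+1)) (pos U m₀) := by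
        intro h
        have := hordi.1 h
        omega
      have hYj : swLT (pos U m₀) (pos U (i+1)) := by
        rcases hcmp0 (i+1) hjS m₀ hm0S with h | h
        · exact absurd h hnYj
        · exact ⟨h, by intro hh; exact hnYj (hh ▸ weakSW_refl _)⟩
      obtain ⟨hAj1, hBj1'⟩ := hrho _ hMj (hne_posN (i+1) hjI hjn) hYj
      by_cases hAiY : pos U i = pos U m₀
      · have hBi' : (pos U i).1 < (nextSW C (pos U i)).1 :=
          htau _ hMi (hne_posN i hiI hin) (by rw [hAiY]; exact weakSW_refl _)
        have e1 : (pos U i).1 = (pos U m₀).1 := by rw [hAiY]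
        constructor
        · intro h; omega
        · intro h; omega
      · rcases hcmp0 i hiS m₀ hm0S with h | h
        · -- i strictly southwest of Y
          have hAi1 : (pos U m₀).1 < (pos U i).1 :=
            hsigma _ (hCP hMi) ⟨h, hAiY⟩
          have hBi' : (pos U i).1 < (nextSW C (pos U i)).1 :=
            htau _ hMi (hne_posN i hiI hin) h
          constructor
          · intro hh; omega
          · intro hh
            rw [hBj1'] at hh
            omega
        · -- i weakly northeast of Y
          obtain ⟨hAi1, hBi1'⟩ := hrho _ hMi (hne_posN i hiI hin)
            ⟨h, fun hh => hAiY hh.symm⟩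
          rw [hAj1, hAi1, hBj1', hBi1']
    · -- (b1) : i+1 southwest of i
      have hsw : swLT (pos U (i+1)) (pos U i) := ⟨hcm, fun h => hij_ne h.symm⟩
      have hordi := hord0 (i+1) hjS i hiS hsw
      have hnYj : ¬ weakSW (pos U m₀) (pos U (i+1)) := by
        intro h
        have := hordi.2 h
        omega
      have hjY : swLT (pos U (i+1)) (pos U m₀) := by
        rcases hcmp0 (i+1) hjS m₀ hm0S with h | h
        · exact ⟨h, by intro hh; exact hnYj (hh ▸ weakSW_refl _)⟩
        · exact absurd h hnYj
      -- left side is a descent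
      have hdesT : (pos U i).1 < (pos U (i+1)).1 := by
        refine strict_south_of_entry (T := U) (pos_mem hjI) (pos_mem hiI) hcm ?_
        rw [entry_pos hiI, entry_pos hjI]
        omega
      have hdesc : (pos U m₀).1 < (pos U (i+1)).1 := hsigma _ (hCP hMj) hjY
      have hsplit : weakSW (pos U i) (pos U m₀) ∨ swLT (pos U m₀) (pos U i) := by
        rcases hcmp0 i hiS m₀ hm0S with h | h
        · exact Or.inl h
        · by_cases hxY : pos U i = pos U m₀
          · exact Or.inl (by rw [hxY]; exact weakSW_refl _)
          · exact Or.inr ⟨h, fun hh => hxY hh.symm⟩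
      rcases hsplit with h | h
      · -- i weakly southwest of Y : show pred of pos i equals pos (i+1)
        have hBieq : nextSW C (pos U i) = pos U (i+1) := by
          have hwAj : weakSW (pos U (i+1)) (nextSW C (pos U i)) :=
            hBi3 _ hMj hsw
          by_contra hne
          obtain ⟨hwS, hwpos⟩ := hPentry _ (hCP hBi1)
          set w := U.entry (nextSW C (pos U i)) with hwdef
          have h1 := hord0 (i+1) hjS w hwS
            (by rw [hwpos]; exact ⟨hwAj, fun hh => hne hh.symm⟩)
          have h2 := hord0 w hwS i hiS (by rw [hwpos]; exact hBi2)
          have hw1 : w < i + 1 := h1.1 (by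
            rw [hwpos]
            exact weakSW_trans hBi2.1 h)
          have hw2 : i < w := h2.1 h
          omega
        have hBj' : (pos U (i+1)).1 < (nextSW C (pos U (i+1))).1 :=
          htau _ hMj (hne_posN (i+1) hjI hjn) hjY.1
        rw [hBieq]
        constructor
        · intro _; omega
        · intro _; exact hdesT
      · -- i strictly northeast of Y
        obtain ⟨hAi1, hBi1'⟩ := hrho _ hMi (hne_posN i hiI hin) h
        have hBj1 : (pos U (i+1)).1 ≤ (nextSW C (pos U (i+1))).1 := hBj2.1.1
        constructor
        · intro _; omega
        · intro _; exact hdesT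
  · -- case (d): i moved, i+1 not moved
    have hiS : i ∈ S := (hmemP i hiI).mp (hCP hMi)
    have hjS : i + 1 ∈ S := by
      simp only [hSdef, Finset.mem_Icc] at hiS ⊢
      omega
    have hjP : pos U (i+1) ∈ P := (hmemP _ hjI).mpr hjS
    have hXj : weakSW X (pos U (i+1)) := by
      rcases hPcomp _ hjP X hXP with h | h
      · have hmem : pos U (i+1) ∈ C := Finset.mem_filter.mpr ⟨hjP, h⟩
        exact absurd hmem hMj
      · exact h
    obtain ⟨hBi1, hBi2, hBi3⟩ := hpred _ hMi (hne_posN i hiI hin)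
    have r1 : (pos U (i+1)).1 ≤ (pos U i).1 :=
      (weakSW_trans (hCX _ hMi) hXj).1
    have r2 : (pos U (i+1)).1 ≤ (nextSW C (pos U i)).1 :=
      (weakSW_trans (hCX _ hBi1) hXj).1
    rw [hmoved i hiI hin hMi, hunmoved (i+1) hjI hMj]
    constructor <;> (intro h; omega)
  · -- case (c): i not moved, i+1 moved
    have hjS : i + 1 ∈ S := (hmemP (i+1) hjI).mp (hCP hMj)
    obtain ⟨hBj1, hBj2, hBj3⟩ := hpred _ hMj (hne_posN (i+1) hjI hjn)
    rw [hunmoved i hiI hMi, hmoved (i+1) hjI hjn hMj]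
    by_cases hiS : i ∈ S
    · -- (c1)
      have hiP : pos U i ∈ P := (hmemP _ hiI).mpr hiS
      have hXi : weakSW X (pos U i) := by
        rcases hPcomp _ hiP X hXP with h | h
        · have hmem : pos U i ∈ C := Finset.mem_filter.mpr ⟨hiP, h⟩
          exact absurd hmem hMi
        · exact h
      have r1 : (pos U i).1 ≤ (pos U (i+1)).1 :=
        (weakSW_trans (hCX _ hMj) hXi).1
      have r2 : (pos U i).1 ≤ (nextSW C (pos U (i+1))).1 :=
        (weakSW_trans (hCX _ hBj1) hXi).1
      have r3 : (pos U (i+1)).1 ≤ (nextSW C (pos U (i+1))).1 := hBj2.1.1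
      have hne' : (pos U i).1 ≠ (pos U (i+1)).1 := by
        intro heq
        have hcw : weakSW (pos U (i+1)) (pos U i) :=
          weakSW_trans (hCX _ hMj) hXi
        have hnecell : pos U (i+1) ≠ pos U i := by
          intro hh
          have := pos_injOn hjI hiI hh
          omega
        have := entry_lt_of_le_le (T := U) (pos_mem hjI) (pos_mem hiI)
          (le_of_eq heq.symm) hcw.2 hnecell
        rw [entry_pos hiI, entry_pos hjI] at this
        omega
      constructor <;> (intro h; omega)
    · -- (c2): the maximality case
      have hm0eq : m₀ = i + 1 := by
        simp only [hSdef, Finset.mem_Icc] at hiS hjS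
        omega
      have hAjY : pos U (i+1) = pos U m₀ := by rw [hm0eq]
      have hYB : (pos U (i+1)).1 < (nextSW C (pos U (i+1))).1 :=
        htau _ hMj (hne_posN (i+1) hjI hjn) (by rw [hAjY]; exact weakSW_refl _)
      constructor
      · intro h; omega
      · intro h
        by_contra hcon
        push_neg at hcon
        -- here `hcon : (pos U (i+1)).1 ≤ (pos U i).1` and
        -- `h : (pos U i).1 < (nextSW C (pos U (i+1))).1`; contradiction with
        -- maximality of the min-unimodal window
        apply hmax (by omega)
        set Q := pos U i with hQdef
        set B := nextSW C (pos U (i+1)) with hBdef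
        have hQskew : Q ∈ skewCells lam mu := pos_mem hiI
        have hentryQ : U.entry Q = i := entry_pos hiI
        have hiv : i = m₀ - 1 := by omega
        -- Q lies on the southeast boundary
        have hQbdy : Q ∈ SEboundary lam mu := by
          rw [mem_boundary]
          refine ⟨hQskew, ?_⟩
          intro hdse
          have hq : (Q.1, Q.2) ∈ skewCells lam mu := by simpa using hQskew
          have ha' : (Q.1 + 1, Q.2) ∈ skewCells lam mu :=
            mem_skew_of_between hq hdse (by omega) (by omega) (by omega) (by omega)
          have hb' : (Q.1, Q.2 + 1) ∈ skewCells lam mu :=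
            mem_skew_of_between hq hdse (by omega) (by omega) (by omega) (by omega)
          have e1 : U.entry (Q.1, Q.2) < U.entry (Q.1 + 1, Q.2) :=
            entry_col_lt hq ha' (by omega)
          have e3 : U.entry (Q.1 + 1, Q.2) < U.entry (Q.1 + 1, Q.2 + 1) :=
            entry_row_lt ha' hdse (by omega)
          have e4 : U.entry (Q.1, Q.2 + 1) < U.entry (Q.1 + 1, Q.2 + 1) :=
            entry_col_lt hb' hdse (by omega)
          have hQe : U.entry (Q.1, Q.2) = i := by
            rw [show ((Q.1, Q.2) : Cell) = Q from rfl, hentryQ]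
          have hmema : U.entry (Q.1 + 1, Q.2) ∈ S := by
            have h1 := entry_mem (T := U) ha'
            simp only [hSdef, Finset.mem_Icc] at h1 ⊢
            omega
          have hmemd : U.entry (Q.1 + 1, Q.2 + 1) ∈ S := by
            have h1 := entry_mem (T := U) hdse
            simp only [hSdef, Finset.mem_Icc] at h1 ⊢
            omega
          have hmemb : U.entry (Q.1, Q.2 + 1) ∈ S := by
            have h1 := entry_mem (T := U) hb'
            have h2 : U.entry (Q.1, Q.2) < U.entry (Q.1, Q.2 + 1) :=
              entry_row_lt hq hb' (by omega)
            simp only [hSdef, Finset.mem_Icc] at h1 ⊢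
            omega
          have pa : pos U (U.entry (Q.1 + 1, Q.2)) = (Q.1 + 1, Q.2) :=
            pos_eq_of ha' rfl
          have pd : pos U (U.entry (Q.1 + 1, Q.2 + 1)) = (Q.1 + 1, Q.2 + 1) :=
            pos_eq_of hdse rfl
          have pb : pos U (U.entry (Q.1, Q.2 + 1)) = (Q.1, Q.2 + 1) :=
            pos_eq_of hb' rfl
          have hx1 := hord0 _ hmema _ hmemd (by
            rw [pa, pd]
            exact ⟨⟨by omega, by omega⟩, by
              intro hh
              have := congrArg Prod.snd hh
              simp at this⟩)
          have hnd1 : ¬ weakSW ((Q.1 + 1, Q.2 + 1) : Cell) (pos U m₀) := by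
            intro hh
            have := hx1.1 (by rw [pd]; exact hh)
            omega
          have hx2 := hord0 _ hmemd _ hmemb (by
            rw [pd, pb]
            exact ⟨⟨by omega, by omega⟩, by
              intro hh
              have := congrArg Prod.fst hh
              simp at this⟩)
          have hnd2 : ¬ weakSW (pos U m₀) ((Q.1 + 1, Q.2 + 1) : Cell) := by
            intro hh
            have := hx2.2 (by rw [pd]; exact hh)
            omega
          rcases hcmp0 _ hmemd m₀ hm0S with hh | hh
          · exact hnd1 (by rwa [pd] at hh)
          · exact hnd2 (by rwa [pd] at hh)
        -- basic orientation facts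
        have hYbdy : pos U m₀ ∈ SEboundary lam mu := hbdy0 m₀ hm0S
        have hQr' : (pos U m₀).1 ≤ Q.1 := by rw [← hAjY]; exact hcon
        have hQneY : Q ≠ pos U m₀ := by
          intro he
          rw [he, entry_pos (hSsub m₀ hm0S)] at hentryQ
          omega
        have hQY : swLT Q (pos U m₀) := by
          rcases boundary_comparable hQbdy hYbdy with hh | hh
          · exact ⟨hh, hQneY⟩
          · exfalso
            have hre : (pos U m₀).1 = Q.1 := le_antisymm hQr' hh.1
            have := entry_lt_of_le_le (T := U) (pos_mem (hSsub m₀ hm0S)) hQskew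
              (le_of_eq hre) hh.2 (fun he => hQneY he.symm)
            rw [entry_pos (hSsub m₀ hm0S), hentryQ] at this
            omega
        have hrowYB : (pos U m₀).1 < B.1 := by rw [← hAjY]; exact hYB
        -- Q is in the same component as Y
        have hwB := hPentry B (hCP hBj1)
        have hscBY : sameComp (skewCells lam mu) B (pos U m₀) := by
          have := hsc0 (U.entry B) hwB.1 m₀ hm0S
          rwa [hwB.2] at this
        obtain ⟨z, hzP, hzr, hzpath⟩ := exists_row_on_path hscBY.2.2 hscBY.1
          (r := Q.1) hQr' (le_of_lt h)
        have hscQY : sameComp (skewCells lam mu) Q (pos U m₀) :=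
          sameComp_trans (sameComp_of_same_row hQskew hzP hzr.symm)
            ⟨hzP, pos_mem (hSsub m₀ hm0S), hzpath⟩
        -- assemble the larger min-unimodal window
        have hm2' : 2 ≤ m₀ := by omega
        have hne' : (Finset.Icc (m₀ - 1) n).Nonempty :=
          ⟨m₀ - 1, by simp only [Finset.mem_Icc]; omega⟩
        have hmin2 : (Finset.Icc (m₀ - 1) n).min' hne' = m₀ - 1 :=
          Icc_min'_eq (by omega) hne'
        have hQm : pos U (m₀ - 1) = Q := by rw [hQdef, hiv]
        have hcase : ∀ x ∈ Finset.Icc (m₀ - 1) n, x = m₀ - 1 ∨ x ∈ S := by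
          intro x hx
          simp only [Finset.mem_Icc] at hx
          simp only [hSdef, Finset.mem_Icc]
          omega
        have hbdy' : ∀ x ∈ Finset.Icc (m₀ - 1) n, pos U x ∈ SEboundary lam mu := by
          intro x hx
          rcases hcase x hx with rfl | hxS
          · rw [hQm]; exact hQbdy
          · exact hbdy0 x hxS
        refine ⟨hne', ?_, hbdy', ?_, ?_, ?_⟩
        · intro x hx
          simp only [Finset.mem_Icc] at hx ⊢
          omega
        · -- same component
          have hself : sameComp (skewCells lam mu) Q Q :=
            ⟨hQskew, hQskew, Relation.ReflTransGen.refl⟩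
          intro x hx y hy
          rcases hcase x hx with rfl | hxS <;> rcases hcase y hy with h' | hyS
          · rw [h', hQm]; exact hself
          · rw [hQm]
            exact sameComp_trans hscQY (hsc0 m₀ hm0S y hyS)
          · rw [h', hQm]
            exact sameComp_symm (sameComp_trans hscQY (hsc0 m₀ hm0S x hxS))
          · exact hsc0 x hxS y hyS
        · -- comparability
          intro x hx y hy
          exact boundary_comparable (hbdy' x hx) (hbdy' y hy)
        · -- the ordering condition
          intro x hx y hy hlt
          rw [hmin2, hQm]
          rcases hcase x hx with rfl | hxS
          · rcases hcase y hy with h' | hyS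
            · rw [hQm, h', hQm] at hlt
              exact absurd hlt (swLT_irrefl _)
            · rw [hQm] at hlt
              constructor
              · intro hw
                exact absurd (weakSW_antisymm hlt.1 hw) hlt.2
              · intro _
                simp only [hSdef, Finset.mem_Icc] at hyS
                omega
          · rcases hcase y hy with h' | hyS
            · rw [h', hQm] at hlt
              constructor
              · intro _
                simp only [hSdef, Finset.mem_Icc] at hxS
                omega
              · intro hw
                exact absurd (weakSW_antisymm hlt.1 hw) hlt.2
            · constructor
              · intro hw
                exact (hord0 x hxS y hyS hlt).1 (weakSW_trans hw hQY.1)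
              · intro hw
                have hYx : weakSW (pos U m₀) (pos U x) := by
                  rcases hcmp0 x hxS m₀ hm0S with hh | hh
                  · by_cases hxY : pos U x = pos U m₀
                    · rw [hxY]; exact weakSW_refl _
                    · exfalso
                      have hxC : pos U x ∈ C := Finset.mem_filter.mpr
                        ⟨(hmemP x (hSsub x hxS)).mpr hxS,
                          weakSW_trans hh (hAjY ▸ hCX _ hMj)⟩
                      have hwb := hBj3 _ hxC (by rw [hAjY]; exact ⟨hh, hxY⟩)
                      have h1 : B.1 ≤ (pos U x).1 := hwb.1
                      have h2 : (pos U x).1 ≤ Q.1 := hw.1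
                      omega
                  · exact hh
                exact (hord0 x hxS y hyS hlt).2 hYx
  · -- case (a): neither moved
    rw [hunmoved i hiI hMi, hunmoved (i+1) hjI hMj]

end MainAbstract


section Transpose

variable {lam mu : YoungDiagram}

theorem mem_skew_transpose {c : Cell} :
    c ∈ skewCells lam.transpose mu.transpose ↔ c.swap ∈ skewCells lam mu := by
  simp [skewCells, YoungDiagram.mem_cells, YoungDiagram.mem_transpose]

theorem skew_transpose_eq :
    skewCells lam.transpose mu.transpose = (skewCells lam mu).image Prod.swap := by
  ext c
  rw [mem_skew_transpose, Finset.mem_image]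
  constructor
  · intro h; exact ⟨c.swap, h, Prod.swap_swap c⟩
  · rintro ⟨a, ha, rfl⟩; rwa [Prod.swap_swap]

theorem numCells_transpose :
    numCells lam.transpose mu.transpose = numCells lam mu := by
  rw [numCells, numCells, skew_transpose_eq,
    Finset.card_image_of_injective _ Prod.swap_injective]

/-- The transpose of a standard Young tableau. -/
noncomputable def trSYT (T : SYT lam mu) : SYT lam.transpose mu.transpose where
  entry c := T.entry c.swap
  bijOn := by
    have hsw : Set.BijOn Prod.swap
        ((skewCells lam.transpose mu.transpose : Finset Cell) : Set Cell)
        ((skewCells lam mu : Finset Cell) : Set Cell) := by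
      refine ⟨fun c hc => ?_, fun a _ b _ h => Prod.swap_injective h, fun y hy => ?_⟩
      · exact Finset.mem_coe.mpr (mem_skew_transpose.mp (Finset.mem_coe.mp hc))
      · refine ⟨y.swap, Finset.mem_coe.mpr (mem_skew_transpose.mpr ?_), Prod.swap_swap y⟩
        rwa [Prod.swap_swap]
    have := T.bijOn.comp hsw
    rw [numCells_transpose]
    exact this
  row_lt := by
    intro i j hm1 hm2
    have h1 : ((j, i) : Cell) ∈ skewCells lam mu := mem_skew_transpose.mp hm1
    have h2 : ((j + 1, i) : Cell) ∈ skewCells lam mu := mem_skew_transpose.mp hm2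
    exact T.col_lt j i h1 h2
  col_lt := by
    intro i j hm1 hm2
    have h1 : ((j, i) : Cell) ∈ skewCells lam mu := mem_skew_transpose.mp hm1
    have h2 : ((j, i + 1) : Cell) ∈ skewCells lam mu := mem_skew_transpose.mp hm2
    exact T.row_lt j i h1 h2
  zero_outside := by
    intro c hc
    exact T.zero_outside c.swap (fun h => hc (mem_skew_transpose.mpr h))

theorem pos_transpose {T : SYT lam mu} {x : ℕ}
    (hx : x ∈ Finset.Icc 1 (numCells lam mu)) :
    pos (trSYT T) x = (pos T x).swap := by
  refine pos_eq_of ?_ ?_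
  · rw [mem_skew_transpose, Prod.swap_swap]
    exact pos_mem hx
  · show T.entry (pos T x).swap.swap = x
    rw [Prod.swap_swap]
    exact entry_pos hx

theorem weakSW_swap {a b : Cell} : weakSW a.swap b.swap ↔ weakSW b a :=
  ⟨fun h => ⟨h.2, h.1⟩, fun h => ⟨h.2, h.1⟩⟩

theorem swLT_swap {a b : Cell} : swLT a.swap b.swap ↔ swLT b a := by
  constructor
  · rintro ⟨h1, h2⟩
    exact ⟨weakSW_swap.mp h1, fun h => h2 (h ▸ rfl)⟩
  · rintro ⟨h1, h2⟩
    refine ⟨weakSW_swap.mpr h1, fun h => h2 ?_⟩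
    have := congrArg Prod.swap h
    rw [Prod.swap_swap, Prod.swap_swap] at this
    exact this.symm


theorem adjacent_swap {a b : Cell} (h : adjacent a b) : adjacent a.swap b.swap := by
  unfold adjacent at *
  simp only [Prod.fst_swap, Prod.snd_swap]
  tauto

theorem sameComp_swap {P : Finset Cell} {a b : Cell} (h : sameComp P a b) :
    sameComp (P.image Prod.swap) a.swap b.swap := by
  obtain ⟨ha, hb, hpath⟩ := h
  refine ⟨Finset.mem_image_of_mem _ ha, Finset.mem_image_of_mem _ hb, ?_⟩
  refine Relation.ReflTransGen.lift Prod.swap ?_ _ _ hpath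
  rintro x y ⟨hx, hy, hadj⟩
  exact ⟨Finset.mem_image_of_mem _ hx, Finset.mem_image_of_mem _ hy, adjacent_swap hadj⟩

theorem mem_SEboundary_transpose {c : Cell} :
    c ∈ SEboundary lam.transpose mu.transpose ↔ c.swap ∈ SEboundary lam mu := by
  rw [mem_boundary, mem_boundary, mem_skew_transpose]
  constructor
  · rintro ⟨h1, h2⟩
    refine ⟨h1, fun h => h2 ?_⟩
    rw [mem_skew_transpose]
    exact h
  · rintro ⟨h1, h2⟩
    refine ⟨h1, fun h => h2 ?_⟩
    rw [mem_skew_transpose] at h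
    exact h

theorem minUnimodal_transpose {T : SYT lam mu} {S : Finset ℕ} :
    MinUnimodalSE (trSYT T) S ↔ MinUnimodalSE T S := by
  constructor
  · rintro ⟨hne, hsub, hbdy, hsc, hcmp, hord⟩
    rw [numCells_transpose] at hsub
    have hpos : ∀ x ∈ S, pos (trSYT T) x = (pos T x).swap :=
      fun x hx => pos_transpose (hsub hx)
    refine ⟨hne, hsub, ?_, ?_, ?_, ?_⟩
    · intro x hx
      have := hbdy x hx
      rw [hpos x hx, mem_SEboundary_transpose, Prod.swap_swap] at this
      exact this
    · intro x hx y hy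
      have himg : (skewCells lam.transpose mu.transpose).image Prod.swap
          = skewCells lam mu := by
        ext c
        simp only [Finset.mem_image]
        constructor
        · rintro ⟨a, ha, rfl⟩
          exact mem_skew_transpose.mp ha
        · intro hc
          exact ⟨c.swap, mem_skew_transpose.mpr (by rwa [Prod.swap_swap]),
            Prod.swap_swap c⟩
      have h2 := sameComp_swap (hsc x hx y hy)
      rw [himg, hpos x hx, hpos y hy, Prod.swap_swap, Prod.swap_swap] at h2
      exact h2
    · intro x hx y hy
      have := hcmp x hx y hy
      rw [hpos x hx, hpos y hy, weakSW_swap, weakSW_swap] at this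
      exact this.symm
    · intro x hx y hy hlt
      have hm := S.min'_mem hne
      have h := hord y hy x hx (by
        rw [hpos x hx, hpos y hy, swLT_swap]
        exact hlt)
      rw [hpos x hx, hpos y hy, hpos _ hm, weakSW_swap, weakSW_swap] at h
      exact ⟨h.2, h.1⟩
  · rintro ⟨hne, hsub, hbdy, hsc, hcmp, hord⟩
    have hsub' : S ⊆ Finset.Icc 1 (numCells lam.transpose mu.transpose) := by
      rw [numCells_transpose]; exact hsub
    have hpos : ∀ x ∈ S, pos (trSYT T) x = (pos T x).swap :=
      fun x hx => pos_transpose (hsub hx)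
    refine ⟨hne, hsub', ?_, ?_, ?_, ?_⟩
    · intro x hx
      rw [hpos x hx, mem_SEboundary_transpose, Prod.swap_swap]
      exact hbdy x hx
    · intro x hx y hy
      have := sameComp_swap (hsc x hx y hy)
      rw [← skew_transpose_eq, ← hpos x hx, ← hpos y hy] at this
      exact this
    · intro x hx y hy
      rw [hpos x hx, hpos y hy, weakSW_swap, weakSW_swap]
      exact (hcmp x hx y hy).symm
    · intro x hx y hy hlt
      have hm := S.min'_mem hne
      rw [hpos x hx, hpos y hy, swLT_swap] at hlt
      have h := hord y hy x hx hlt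
      rw [hpos x hx, hpos y hy, hpos _ hm, weakSW_swap, weakSW_swap]
      exact ⟨h.2, h.1⟩

theorem nextNE_swap {P : Finset Cell} {c : Cell} :
    nextNE (P.image Prod.swap) c.swap = (nextSW P c).swap := by
  classical
  by_cases h : ∃ d ∈ P, swLT d c ∧ ∀ e ∈ P, swLT e c → weakSW e d
  · have h' : ∃ d ∈ P.image Prod.swap, swLT c.swap d ∧
        ∀ e ∈ P.image Prod.swap, swLT c.swap e → weakSW d e := by
      obtain ⟨d, hd, hd1, hd2⟩ := h
      refine ⟨d.swap, Finset.mem_image_of_mem _ hd, swLT_swap.mpr hd1, ?_⟩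
      rintro e he hce
      obtain ⟨e0, he0, rfl⟩ := Finset.mem_image.mp he
      rw [weakSW_swap]
      exact hd2 e0 he0 (swLT_swap.mp hce)
    rw [nextNE, dif_pos h', nextSW, dif_pos h]
    obtain ⟨hq1, hq2, hq3⟩ := h'.choose_spec
    obtain ⟨hp1, hp2, hp3⟩ := h.choose_spec
    -- both choices are mutually dominated
    obtain ⟨q0, hq0, hq0e⟩ := Finset.mem_image.mp hq1
    have e1 : weakSW h'.choose (h.choose).swap :=
      hq3 _ (Finset.mem_image_of_mem _ hp1) (swLT_swap.mpr hp2)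
    have e2 : weakSW q0 h.choose := hp3 q0 hq0 (swLT_swap.mp (hq0e ▸ hq2))
    have e3 : weakSW (h.choose).swap h'.choose := by
      rw [← hq0e, weakSW_swap]
      exact e2
    exact (weakSW_antisymm e1 e3).symm ▸ rfl
  · have h' : ¬ ∃ d ∈ P.image Prod.swap, swLT c.swap d ∧
        ∀ e ∈ P.image Prod.swap, swLT c.swap e → weakSW d e := by
      rintro ⟨d, hd, hd1, hd2⟩
      obtain ⟨d0, hd0, rfl⟩ := Finset.mem_image.mp hd
      refine h ⟨d0, hd0, swLT_swap.mp hd1, ?_⟩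
      intro e he hec
      have := hd2 e.swap (Finset.mem_image_of_mem _ he) (swLT_swap.mpr hec)
      rwa [weakSW_swap] at this
    rw [nextNE, dif_neg h', nextSW, dif_neg h]

end Transpose


section Glue

variable {lam mu : YoungDiagram}

theorem southEnd_spec {P : Finset Cell} {Y : Cell} (hY : Y ∈ P) :
    southEnd P Y ∈ P ∧ (southEnd P Y).2 = Y.2 ∧
      ∀ d ∈ P, d.2 = Y.2 → d.1 ≤ (southEnd P Y).1 := by
  classical
  have h : ∃ c ∈ P, c.2 = Y.2 ∧ ∀ d ∈ P, d.2 = Y.2 → d.1 ≤ c.1 := by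
    obtain ⟨m, hm, hmax⟩ := Finset.exists_max_image (P.filter (fun d => d.2 = Y.2))
      (fun d => d.1) ⟨Y, Finset.mem_filter.mpr ⟨hY, rfl⟩⟩
    obtain ⟨hmP, hmc⟩ := Finset.mem_filter.mp hm
    exact ⟨m, hmP, hmc, fun d hd hdc => hmax d (Finset.mem_filter.mpr ⟨hd, hdc⟩)⟩
  rw [southEnd, dif_pos h]
  obtain ⟨h1, h2, h3⟩ := h.choose_spec
  exact ⟨h1, h2, h3⟩

theorem eastEnd_spec {P : Finset Cell} {Y : Cell} (hY : Y ∈ P) :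
    eastEnd P Y ∈ P ∧ (eastEnd P Y).1 = Y.1 ∧
      ∀ d ∈ P, d.1 = Y.1 → d.2 ≤ (eastEnd P Y).2 := by
  classical
  have h : ∃ c ∈ P, c.1 = Y.1 ∧ ∀ d ∈ P, d.1 = Y.1 → d.2 ≤ c.2 := by
    obtain ⟨m, hm, hmax⟩ := Finset.exists_max_image (P.filter (fun d => d.1 = Y.1))
      (fun d => d.2) ⟨Y, Finset.mem_filter.mpr ⟨hY, rfl⟩⟩
    obtain ⟨hmP, hmc⟩ := Finset.mem_filter.mp hm
    exact ⟨m, hmP, hmc, fun d hd hdc => hmax d (Finset.mem_filter.mpr ⟨hd, hdc⟩)⟩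
  rw [eastEnd, dif_pos h]
  obtain ⟨h1, h2, h3⟩ := h.choose_spec
  exact ⟨h1, h2, h3⟩

/-- The singleton `{n}` is always southeast min-unimodal. -/
theorem minuni_single (T : SYT lam mu) (hn : 1 ≤ numCells lam mu) :
    MinUnimodalSE T (Finset.Icc (numCells lam mu) (numCells lam mu)) := by
  have hnI : numCells lam mu ∈ Finset.Icc 1 (numCells lam mu) := by simp [hn]
  have hbdy : pos T (numCells lam mu) ∈ SEboundary lam mu := by
    rw [mem_boundary]
    refine ⟨pos_mem hnI, ?_⟩
    intro hdse
    set p := pos T (numCells lam mu) with hp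
    have hpm : (p.1, p.2) ∈ skewCells lam mu := by simpa using pos_mem hnI
    have hmid : (p.1, p.2 + 1) ∈ skewCells lam mu :=
      mem_skew_of_between hpm hdse (by omega) (by omega) (by omega) (by omega)
    have h1 : T.entry (p.1, p.2) < T.entry (p.1, p.2 + 1) :=
      entry_row_lt hpm hmid (by omega)
    have h2 : T.entry (p.1, p.2) = numCells lam mu := by
      rw [show ((p.1, p.2) : Cell) = p from rfl, hp]
      exact entry_pos hnI
    have h3 := entry_mem (T := T) hmid
    simp only [Finset.mem_Icc] at h3
    omega
  have hmem : ∀ x ∈ Finset.Icc (numCells lam mu) (numCells lam mu),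
      x = numCells lam mu := by
    intro x hx
    simp only [Finset.mem_Icc] at hx
    omega
  refine ⟨⟨numCells lam mu, by simp⟩, ?_, ?_, ?_, ?_, ?_⟩
  · intro x hx
    rw [hmem x hx]
    simpa using hn
  · intro x hx
    rw [hmem x hx]
    exact hbdy
  · intro x hx y hy
    rw [hmem x hx, hmem y hy]
    exact ⟨pos_mem hnI, pos_mem hnI, Relation.ReflTransGen.refl⟩
  · intro x hx y hy
    rw [hmem x hx, hmem y hy]
    exact Or.inl (weakSW_refl _)
  · intro x hx y hy hlt
    rw [hmem x hx, hmem y hy] at hlt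
    exact absurd hlt (swLT_irrefl _)

end Glue

/-- Proposition `rotse-preserve-descents`. For every
standard Young tableau `T` of shape `λ/μ` and every `i ∈ {1, …, n-2}`,
`i ∈ Des(T)` if and only if `i ∈ Des(Rot_SE(T))`. -/
theorem rotSE_preserve_descents (lam mu : YoungDiagram) (hsub : mu ≤ lam)
    (T R : SYT lam mu) (hR : R.entry = rotEntry T)
    (i : ℕ) (h1 : 1 ≤ i) (h2 : i ≤ numCells lam mu - 2) :
    i ∈ Des T ↔ i ∈ Des R := by
  classical
  have hn3 : 3 ≤ numCells lam mu := by omega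
  set n := numCells lam mu with hn
  have hbdd : BddAbove {k : ℕ | 1 ≤ k ∧ k ≤ n ∧
      MinUnimodalSE T (Finset.Icc (n - k + 1) n)} := ⟨n, fun k hk => hk.2.1⟩
  have hne1 : (1 : ℕ) ∈ {k : ℕ | 1 ≤ k ∧ k ≤ n ∧
      MinUnimodalSE T (Finset.Icc (n - k + 1) n)} := by
    refine ⟨le_rfl, by omega, ?_⟩
    have e : n - 1 + 1 = n := by omega
    rw [e]
    exact minuni_single T (by omega)
  have hKset : 1 ≤ kSE T ∧ kSE T ≤ n ∧
      MinUnimodalSE T (Finset.Icc (n - kSE T + 1) n) :=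
    Nat.sSup_mem ⟨1, hne1⟩ hbdd
  have hKmax : ∀ k, (1 ≤ k ∧ k ≤ n ∧
      MinUnimodalSE T (Finset.Icc (n - k + 1) n)) → k ≤ kSE T :=
    fun k hk => le_csSup hbdd hk
  obtain ⟨hK1, hK2, hKuni⟩ := hKset
  set m₀ := n - kSE T + 1 with hm₀def
  have hm1 : 1 ≤ m₀ := by omega
  have hm2 : m₀ ≤ n := by omega
  have hmaxT : 2 ≤ m₀ → ¬ MinUnimodalSE T (Finset.Icc (m₀ - 1) n) := by
    intro hm2' hM
    have he : n - (kSE T + 1) + 1 = m₀ - 1 := by omega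
    have := hKmax (kSE T + 1) ⟨by omega, by omega, by rw [he]; exact hM⟩
    omega
  have hSsub : ∀ x ∈ Finset.Icc m₀ n, x ∈ Finset.Icc 1 n := by
    intro x hx
    simp only [Finset.mem_Icc] at hx ⊢
    omega
  have hnS : n ∈ Finset.Icc m₀ n := by simp only [Finset.mem_Icc]; omega
  have hm0S : m₀ ∈ Finset.Icc m₀ n := by simp only [Finset.mem_Icc]; omega
  have hNP : pos T n ∈ (Finset.Icc m₀ n).image (pos T) :=
    Finset.mem_image_of_mem _ hnS
  have hYP : Ycell T ∈ RpSE T := Finset.mem_image_of_mem _ hm0S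
  have hiI : i ∈ Finset.Icc 1 n := by simp only [Finset.mem_Icc]; omega
  have hjI : i + 1 ∈ Finset.Icc 1 n := by simp only [Finset.mem_Icc]; omega
  have hDes : ∀ (W : SYT lam mu), i ∈ Des W ↔ (pos W i).1 < (pos W (i + 1)).1 := by
    intro W
    rw [Des, Finset.mem_filter, Finset.mem_Icc]
    constructor
    · exact fun h => h.2
    · exact fun h => ⟨⟨h1, by omega⟩, h⟩
  by_cases hSW : SWmostAtN T
  · -- the southwestern case
    have hSWm : ∀ c ∈ (Finset.Icc m₀ n).image (pos T), weakSW (pos T n) c := hSW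
    obtain ⟨X, hXRp, hXeq, hH4⟩ : ∃ X, X ∈ RpSE T ∧ Xend T = X ∧
        (∀ c ∈ ((Finset.Icc m₀ n).image (pos T)).filter (fun c => weakSW c X),
          weakSW (pos T m₀) c → c.1 = (pos T m₀).1) := by
      by_cases hcond : ∃ c ∈ RpSE T, c.2 = (Ycell T).2 ∧ (Ycell T).1 < c.1
      · obtain ⟨hX1, hX2, hX3⟩ := southEnd_spec (P := RpSE T) (Y := Ycell T) hYP
        refine ⟨southEnd (RpSE T) (Ycell T), hX1, ?_, ?_⟩
        · rw [Xend, if_pos hSW, if_pos hcond]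
        · obtain ⟨c₀, hc₀, hc₀col, hc₀row⟩ := hcond
          intro c hc hYc
          exfalso
          obtain ⟨hcP, hcX⟩ := Finset.mem_filter.mp hc
          have r1 : (southEnd (RpSE T) (Ycell T)).1 ≤ c.1 := hcX.1
          have r2 : c.1 ≤ (Ycell T).1 := hYc.1
          have r3 : c₀.1 ≤ (southEnd (RpSE T) (Ycell T)).1 := hX3 c₀ hc₀ hc₀col
          omega
      · obtain ⟨hX1, hX2, hX3⟩ := eastEnd_spec (P := RpSE T) (Y := Ycell T) hYP
        refine ⟨eastEnd (RpSE T) (Ycell T), hX1, ?_, ?_⟩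
        · rw [Xend, if_pos hSW, if_neg hcond]
        · intro c hc hYc
          obtain ⟨hcP, hcX⟩ := Finset.mem_filter.mp hc
          have r1 : (eastEnd (RpSE T) (Ycell T)).1 ≤ c.1 := hcX.1
          have r2 : c.1 ≤ (pos T m₀).1 := hYc.1
          have r3 : (eastEnd (RpSE T) (Ycell T)).1 = (Ycell T).1 := hX2
          have r4 : (Ycell T).1 = (pos T m₀).1 := rfl
          omega
    have hXP' : X ∈ (Finset.Icc m₀ n).image (pos T) := hXRp
    have hchain : chainSE T =
        ((Finset.Icc m₀ n).image (pos T)).filter (fun c => weakSW c X) := by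
      ext c
      rw [chainSE, Finset.mem_filter, Finset.mem_filter]
      constructor
      · rintro ⟨hcP, h | h⟩
        · refine ⟨hcP, ?_⟩
          rw [hXeq] at h
          exact h.2
        · have hc' : c = pos T n := weakSW_antisymm h.2 (hSWm c hcP)
          refine ⟨hcP, ?_⟩
          rw [hc']
          have := hSWm X hXP'
          exact this
      · rintro ⟨hcP, hcX⟩
        refine ⟨hcP, Or.inl ⟨hSWm c hcP, ?_⟩⟩
        rw [hXeq]
        exact hcX
    have hH5 : ∀ c, c ∉ ((Finset.Icc m₀ n).image (pos T)).filter
        (fun c => weakSW c X) → R.entry c = T.entry c := by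
      intro c hc
      rw [hR, rotEntry, if_neg (by rw [hchain]; exact hc)]
    have hH6 : ∀ c ∈ ((Finset.Icc m₀ n).image (pos T)).filter
        (fun c => weakSW c X), c ≠ X →
        R.entry c = T.entry (nextNE (((Finset.Icc m₀ n).image (pos T)).filter
          (fun c => weakSW c X)) c) := by
      intro c hc hcX
      rw [hR, rotEntry, if_pos (by rw [hchain]; exact hc),
        if_neg (show ¬ c = Xend T by rw [hXeq]; exact hcX), if_pos hSW, hchain]
    have hmain := main_abstract T R m₀ hm1 hm2 hKuni X hXP' hSWm hH4 hH5 hH6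
      hmaxT i h1 (by omega)
    rw [hDes T, hDes R]
    exact hmain
  · -- the northeastern case : transpose everything
    have hKuni' := hKuni
    obtain ⟨hne0, hsub0, hbdy0, hsc0, hcmp0, hord0⟩ := hKuni'
    have hmin : (Finset.Icc m₀ n).min' hne0 = m₀ := Icc_min'_eq hm2 hne0
    rw [hmin] at hord0
    have hPval : ∀ c ∈ (Finset.Icc m₀ n).image (pos T),
        ∃ x ∈ Finset.Icc m₀ n, pos T x = c := by
      intro c hc
      simpa using hc
    have hPbdy : ∀ c ∈ (Finset.Icc m₀ n).image (pos T), c ∈ SEboundary lam mu := by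
      intro c hc
      obtain ⟨x, hx, rfl⟩ := hPval c hc
      exact hbdy0 x hx
    have hPcomp : ∀ a ∈ (Finset.Icc m₀ n).image (pos T),
        ∀ b ∈ (Finset.Icc m₀ n).image (pos T), weakSW a b ∨ weakSW b a :=
      fun a ha b hb => boundary_comparable (hPbdy a ha) (hPbdy b hb)
    have hPentry : ∀ c ∈ (Finset.Icc m₀ n).image (pos T),
        T.entry c ∈ Finset.Icc m₀ n ∧ pos T (T.entry c) = c := by
      intro c hc
      obtain ⟨x, hx, rfl⟩ := hPval c hc
      rw [entry_pos (hSsub x hx)]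
      exact ⟨hx, rfl⟩
    have hNE : ∀ c ∈ (Finset.Icc m₀ n).image (pos T), weakSW c (pos T n) := by
      intro c hc
      by_contra hcw
      have hcw2 : swLT (pos T n) c := by
        rcases hPcomp (pos T n) hNP c hc with h | h
        · exact ⟨h, fun he => hcw (by rw [← he]; exact weakSW_refl _)⟩
        · exact absurd h hcw
      have hSW' : ¬ ∀ c ∈ RpSE T, weakSW (posN T) c := hSW
      push_neg at hSW'
      obtain ⟨c₀, hc₀, hcw₀⟩ := hSW'
      have hsw₀ : swLT c₀ (pos T n) := by
        rcases hPcomp c₀ hc₀ (pos T n) hNP with h | h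
        · exact ⟨h, fun he => hcw₀ (by rw [he]; exact weakSW_refl _)⟩
        · exact absurd h hcw₀
      obtain ⟨hx₀S, hx₀pos⟩ := hPentry c₀ hc₀
      obtain ⟨hxS, hxpos⟩ := hPentry c hc
      have hentbd : T.entry c₀ ∈ Finset.Icc 1 n := by
        obtain ⟨x, hx, rfl⟩ := hPval c₀ hc₀
        rw [entry_pos (hSsub x hx)]
        exact hSsub x hx
      have hentbd2 : T.entry c ∈ Finset.Icc 1 n := by
        obtain ⟨x, hx, rfl⟩ := hPval c hc
        rw [entry_pos (hSsub x hx)]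
        exact hSsub x hx
      have h₁ := hord0 (T.entry c₀) hx₀S n hnS (by rw [hx₀pos]; exact hsw₀)
      have hnY : ¬ weakSW (pos T n) (pos T m₀) := by
        intro hw
        have := h₁.1 hw
        simp only [Finset.mem_Icc] at hentbd
        omega
      have h₂ := hord0 n hnS (T.entry c) hxS (by rw [hxpos]; exact hcw2)
      have hYn : ¬ weakSW (pos T m₀) (pos T n) := by
        intro hw
        have := h₂.2 hw
        simp only [Finset.mem_Icc] at hentbd2
        omega
      rcases hcmp0 n hnS m₀ hm0S with h | h
      · exact hnY h
      · exact hYn h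
    obtain ⟨X, hXRp, hXeq, hH4NE⟩ : ∃ X, X ∈ RpSE T ∧ Xend T = X ∧
        (∀ c ∈ ((Finset.Icc m₀ n).image (pos T)).filter (fun c => weakSW X c),
          weakSW c (pos T m₀) → c.2 = (pos T m₀).2) := by
      by_cases hcond : ∃ c ∈ RpSE T, c.1 = (Ycell T).1 ∧ (Ycell T).2 < c.2
      · obtain ⟨hX1, hX2, hX3⟩ := eastEnd_spec (P := RpSE T) (Y := Ycell T) hYP
        refine ⟨eastEnd (RpSE T) (Ycell T), hX1, ?_, ?_⟩
        · rw [Xend, if_neg hSW, if_pos hcond]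
        · obtain ⟨c₀, hc₀, hc₀r, hc₀c⟩ := hcond
          intro c hc hYc
          exfalso
          obtain ⟨hcP, hcX⟩ := Finset.mem_filter.mp hc
          have r1 : (eastEnd (RpSE T) (Ycell T)).2 ≤ c.2 := hcX.2
          have r2 : c.2 ≤ (Ycell T).2 := hYc.2
          have r3 : c₀.2 ≤ (eastEnd (RpSE T) (Ycell T)).2 := hX3 c₀ hc₀ hc₀r
          omega
      · obtain ⟨hX1, hX2, hX3⟩ := southEnd_spec (P := RpSE T) (Y := Ycell T) hYP
        refine ⟨southEnd (RpSE T) (Ycell T), hX1, ?_, ?_⟩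
        · rw [Xend, if_neg hSW, if_neg hcond]
        · intro c hc hYc
          obtain ⟨hcP, hcX⟩ := Finset.mem_filter.mp hc
          have r1 : (southEnd (RpSE T) (Ycell T)).2 ≤ c.2 := hcX.2
          have r2 : c.2 ≤ (pos T m₀).2 := hYc.2
          have r3 : (southEnd (RpSE T) (Ycell T)).2 = (Ycell T).2 := hX2
          have r4 : (Ycell T).2 = (pos T m₀).2 := rfl
          omega
    have hXP' : X ∈ (Finset.Icc m₀ n).image (pos T) := hXRp
    have hchain : chainSE T =
        ((Finset.Icc m₀ n).image (pos T)).filter (fun c => weakSW X c) := by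
      ext c
      rw [chainSE, Finset.mem_filter, Finset.mem_filter]
      constructor
      · rintro ⟨hcP, h | h⟩
        · have hc' : c = pos T n := weakSW_antisymm (hNE c hcP) h.1
          refine ⟨hcP, ?_⟩
          rw [hc']
          exact hNE X hXP'
        · refine ⟨hcP, ?_⟩
          rw [hXeq] at h
          exact h.1
      · rintro ⟨hcP, hcX⟩
        refine ⟨hcP, Or.inr ⟨?_, hNE c hcP⟩⟩
        rw [hXeq]
        exact hcX
    -- now pass to the transpose
    have hnum : numCells lam.transpose mu.transpose = n := numCells_transpose
    have hposmap : ∀ x ∈ Finset.Icc 1 n, pos (trSYT T) x = (pos T x).swap :=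
      fun x hx => pos_transpose hx
    have hposmapR : ∀ x ∈ Finset.Icc 1 n, pos (trSYT R) x = (pos R x).swap :=
      fun x hx => pos_transpose hx
    have hPT : ∀ c : Cell,
        c ∈ (Finset.Icc m₀ (numCells lam.transpose mu.transpose)).image
          (pos (trSYT T)) ↔ c.swap ∈ (Finset.Icc m₀ n).image (pos T) := by
      intro c
      rw [hnum]
      constructor
      · intro hc
        obtain ⟨x, hx, rfl⟩ := Finset.mem_image.mp hc
        rw [hposmap x (hSsub x hx), Prod.swap_swap]
        exact Finset.mem_image_of_mem _ hx
      · intro hc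
        obtain ⟨x, hx, hxe⟩ := Finset.mem_image.mp hc
        refine Finset.mem_image.mpr ⟨x, hx, ?_⟩
        rw [hposmap x (hSsub x hx), hxe, Prod.swap_swap]
    have hCT : ∀ c : Cell,
        (c ∈ ((Finset.Icc m₀ (numCells lam.transpose mu.transpose)).image
          (pos (trSYT T))).filter (fun c => weakSW c X.swap) ↔
          c.swap ∈ chainSE T) := by
      intro c
      rw [Finset.mem_filter, hchain, Finset.mem_filter]
      constructor
      · rintro ⟨hc1, hc2⟩
        refine ⟨(hPT c).mp hc1, ?_⟩
        have h3 : weakSW (c.swap).swap X.swap := by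
          rw [Prod.swap_swap]
          exact hc2
        exact weakSW_swap.mp h3
      · rintro ⟨hc1, hc2⟩
        refine ⟨(hPT c).mpr hc1, ?_⟩
        have h3 : weakSW (c.swap).swap X.swap := weakSW_swap.mpr hc2
        rwa [Prod.swap_swap] at h3
    have hCimg : ((Finset.Icc m₀ (numCells lam.transpose mu.transpose)).image
        (pos (trSYT T))).filter (fun c => weakSW c X.swap) =
        (chainSE T).image Prod.swap := by
      ext c
      rw [hCT c, Finset.mem_image]
      constructor
      · intro h
        exact ⟨c.swap, h, Prod.swap_swap c⟩
      · rintro ⟨a, ha, rfl⟩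
        rwa [Prod.swap_swap]
    have hm2T : m₀ ≤ numCells lam.transpose mu.transpose := by rw [hnum]; exact hm2
    have hMUT : MinUnimodalSE (trSYT T)
        (Finset.Icc m₀ (numCells lam.transpose mu.transpose)) := by
      rw [hnum]
      exact minUnimodal_transpose.mpr hKuni
    have hXPT : X.swap ∈ (Finset.Icc m₀ (numCells lam.transpose mu.transpose)).image
        (pos (trSYT T)) := by
      rw [hPT]
      rw [Prod.swap_swap]
      exact hXRp
    have hSWmT : ∀ c ∈ (Finset.Icc m₀ (numCells lam.transpose mu.transpose)).image
        (pos (trSYT T)),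
        weakSW (pos (trSYT T) (numCells lam.transpose mu.transpose)) c := by
      intro c hc
      have hc' := (hPT c).mp hc
      rw [hnum, hposmap n (by simp only [Finset.mem_Icc]; omega)]
      have h3 : weakSW (pos T n).swap (c.swap).swap := weakSW_swap.mpr (hNE c.swap hc')
      rwa [Prod.swap_swap] at h3
    have hH4T : ∀ c ∈ ((Finset.Icc m₀ (numCells lam.transpose mu.transpose)).image
        (pos (trSYT T))).filter (fun c => weakSW c X.swap),
        weakSW (pos (trSYT T) m₀) c → c.1 = (pos (trSYT T) m₀).1 := by
      intro c hc hm
      rw [hposmap m₀ (hSsub m₀ hm0S)] at hm ⊢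
      have hc' := (hCT c).mp hc
      rw [hchain] at hc'
      have hm' : weakSW c.swap (pos T m₀) := by
        have h3 : weakSW (pos T m₀).swap (c.swap).swap := by
          rwa [Prod.swap_swap]
        exact weakSW_swap.mp h3
      exact hH4NE c.swap hc' hm'
    have hH5T : ∀ c, c ∉ ((Finset.Icc m₀ (numCells lam.transpose mu.transpose)).image
        (pos (trSYT T))).filter (fun c => weakSW c X.swap) →
        (trSYT R).entry c = (trSYT T).entry c := by
      intro c hc
      show R.entry c.swap = T.entry c.swap
      rw [hR, rotEntry, if_neg (fun h => hc ((hCT c).mpr h))]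
    have hH6T : ∀ c ∈ ((Finset.Icc m₀ (numCells lam.transpose mu.transpose)).image
        (pos (trSYT T))).filter (fun c => weakSW c X.swap), c ≠ X.swap →
        (trSYT R).entry c = (trSYT T).entry
          (nextNE (((Finset.Icc m₀ (numCells lam.transpose mu.transpose)).image
            (pos (trSYT T))).filter (fun c => weakSW c X.swap)) c) := by
      intro c hc hcX
      show R.entry c.swap = T.entry (nextNE _ c).swap
      have hc' := (hCT c).mp hc
      have hcX' : ¬ c.swap = Xend T := by
        rw [hXeq]
        intro h
        apply hcX
        rw [← h, Prod.swap_swap]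
      rw [hR, rotEntry, if_pos hc', if_neg hcX', if_neg hSW]
      congr 1
      have h3 := nextNE_swap (P := chainSE T) (c := c.swap)
      rw [Prod.swap_swap] at h3
      rw [hCimg, h3, Prod.swap_swap]
    have hmaxTT : 2 ≤ m₀ → ¬ MinUnimodalSE (trSYT T)
        (Finset.Icc (m₀ - 1) (numCells lam.transpose mu.transpose)) := by
      intro hh hM
      rw [hnum] at hM
      exact hmaxT hh (minUnimodal_transpose.mp hM)
    have hi2T : i + 1 ≤ numCells lam.transpose mu.transpose - 1 := by
      rw [hnum]
      omega
    have hmain := main_abstract (trSYT T) (trSYT R) m₀ hm1 hm2T hMUT X.swap hXPT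
      hSWmT hH4T hH5T hH6T hmaxTT i h1 hi2T
    rw [hposmap i hiI, hposmap (i+1) hjI, hposmapR i hiI, hposmapR (i+1) hjI]
      at hmain
    simp only [Prod.fst_swap] at hmain
    have hdT := descent_dichotomy (T := T) hiI hjI
    have hdR := descent_dichotomy (T := R) hiI hjI
    rw [hDes T, hDes R, hdT, hdR, hmain]


end SkewSE
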